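/- Let μ be a Borel probability measure on Cantor space 2^ω, let A ⊆ 2^ω and s ∈ [0,1). Then: (1) μ_*(A^c) > s if and only if player I has a winning strategy in the measure game G(s,A); and (2) μ*(A^c) ≤ s if and only if player II has a winning strategy in G(s,A). -/

import Mathlib

open MeasureTheory

namespace MeasureGame

/-- Cantor space `2^ω`. -/
abbrev Cantor : Type := ℕ → Bool

/-- The basic cylinder set `N_t` determined by a finite binary string `t`. -/
def cyl (t : List Bool) : Set Cantor := {x | ∀ i : Fin t.length, x i.1 = t.get i}

/-- A round of the measure game: player I's pair of rationals, then player II's bit. -/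
abbrev GRound : Type := (ℚ × ℚ) × Bool

/-- A strategy for player I in the measure game. -/
abbrev StratI : Type := List GRound → ℚ × ℚ

/-- A strategy for player II in the measure game. -/
abbrev StratII : Type := List GRound → ℚ × ℚ → Bool

/-- A run of the measure game. -/
abbrev Run : Type := ℕ → GRound

/-- The history (list of completed rounds) before round `n`. -/
def hist (r : Run) (n : ℕ) : List GRound := (List.range n).map r

/-- Player II's bit at round `n`. -/
def bits (r : Run) (n : ℕ) : Bool := (r n).2

/-- The finite binary string of player II's first `n` bits. -/
def path (r : Run) (n : ℕ) : List Bool := (List.range n).map (bits r)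

/-- The value player I assigned at round `n` to the one-bit extension of the current path by `b`. -/
def valI (r : Run) (n : ℕ) (b : Bool) : ℚ := if b then (r n).1.2 else (r n).1.1

/-- The value selected by player II's move at round `n`. -/
def sel (r : Run) (n : ℕ) : ℚ := valI r n (bits r n)

/-- Legality requirements on the single value player I assigned to `path r n ++ [b]`:
it is nonnegative, at most `μ(N_{t⌢b})`, and strictly below it when the latter is positive. -/
def mOK (μ : Measure Cantor) (r : Run) (n : ℕ) (b : Bool) : Prop :=
  0 ≤ valI r n b ∧ ((valI r n b : ℝ) ≤ (μ (cyl (path r n ++ [b]))).toReal) ∧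
    (0 < (μ (cyl (path r n ++ [b]))).toReal → (valI r n b : ℝ) < (μ (cyl (path r n ++ [b]))).toReal)

/-- Player I's move at round `n` of a run is legal (for the game `G(s, ·)`). -/
def IOK (μ : Measure Cantor) (s : ℝ) (r : Run) : ℕ → Prop
  | 0 => mOK μ r 0 false ∧ mOK μ r 0 true ∧ s < ((r 0).1.1 : ℝ) + ((r 0).1.2 : ℝ)
  | (n + 1) => mOK μ r (n + 1) false ∧ mOK μ r (n + 1) true ∧
      (r (n + 1)).1.1 + (r (n + 1)).1.2 = sel r n

/-- Player II's move at round `n` of a run is legal: the selected value is nonzero. -/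
def IIOK (r : Run) (n : ℕ) : Prop := sel r n ≠ 0

/-- The run `r` is consistent with player I's strategy `σ`. -/
def ConsI (σ : StratI) (r : Run) : Prop := ∀ n, (r n).1 = σ (hist r n)

/-- The run `r` is consistent with player II's strategy `τ`. -/
def ConsII (τ : StratII) (r : Run) : Prop := ∀ n, (r n).2 = τ (hist r n) (r n).1

/-- Player II wins the run `r` of `G(s, A)`: either player I is the first to break a rule,
or all rules are followed and the sequence of II's bits belongs to `A`. -/
def IIWinsRun (μ : Measure Cantor) (s : ℝ) (A : Set Cantor) (r : Run) : Prop :=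
  (∃ n, (∀ m < n, IOK μ s r m ∧ IIOK r m) ∧ ¬ IOK μ s r n) ∨
    ((∀ n, IOK μ s r n ∧ IIOK r n) ∧ bits r ∈ A)

/-- Player I has a winning strategy in the measure game `G(s, A)`. -/
def WinsI (μ : Measure Cantor) (s : ℝ) (A : Set Cantor) : Prop :=
  ∃ σ : StratI, ∀ r : Run, ConsI σ r → ¬ IIWinsRun μ s A r

/-- Player II has a winning strategy in the measure game `G(s, A)`. -/
def WinsII (μ : Measure Cantor) (s : ℝ) (A : Set Cantor) : Prop :=
  ∃ τ : StratII, ∀ r : Run, ConsII τ r → IIWinsRun μ s A r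

/-- The outer measure `μ*(A) = inf {μ(U) : U open, A ⊆ U}`. -/
noncomputable def outerM (μ : Measure Cantor) (A : Set Cantor) : ℝ :=
  sInf {v : ℝ | ∃ U : Set Cantor, IsOpen U ∧ A ⊆ U ∧ v = (μ U).toReal}

/-- The inner measure `μ_*(A) = sup {μ(F) : F closed, F ⊆ A}`. -/
noncomputable def innerM (μ : Measure Cantor) (A : Set Cantor) : ℝ :=
  sSup {v : ℝ | ∃ F : Set Cantor, IsClosed F ∧ F ⊆ A ∧ v = (μ F).toReal}



/-! ### basic string/cylinder lemmas -/

def seg (x : Cantor) (n : ℕ) : List Bool := (List.range n).map x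

@[simp] lemma seg_length (x : Cantor) (n : ℕ) : (seg x n).length = n := by
  simp [seg]

@[simp] lemma seg_zero (x : Cantor) : seg x 0 = [] := rfl

lemma seg_succ (x : Cantor) (n : ℕ) : seg x (n + 1) = seg x n ++ [x n] := by
  simp [seg, List.range_succ]

lemma mem_cyl_iff {t : List Bool} {x : Cantor} :
    x ∈ cyl t ↔ ∀ i : Fin t.length, x i.1 = t.get i := Iff.rfl

@[simp] lemma cyl_nil : cyl ([] : List Bool) = Set.univ := by
  ext x; simp [cyl]

lemma mem_cyl_append {t : List Bool} {b : Bool} {x : Cantor} :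
    x ∈ cyl (t ++ [b]) ↔ x ∈ cyl t ∧ x t.length = b := by
  simp only [cyl, Set.mem_setOf_eq, List.get_eq_getElem]
  constructor
  · intro h
    constructor
    · intro i
      have := h ⟨i.1, by simp⟩
      simpa [List.getElem_append_left i.2] using this
    · have := h ⟨t.length, by simp⟩
      simpa [List.getElem_append_right (le_refl t.length)] using this
  · rintro ⟨h1, h2⟩ i
    have hi : i.1 < t.length + 1 := by simpa using i.2
    rcases Nat.lt_succ_iff_lt_or_eq.1 hi with h | h
    · rw [List.getElem_append_left h]
      exact h1 ⟨i.1, h⟩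
    · rw [List.getElem_append_right (le_of_eq h.symm)]
      simp [h, h2]

lemma cyl_append_subset (t : List Bool) (b : Bool) : cyl (t ++ [b]) ⊆ cyl t :=
  fun _ h => (mem_cyl_append.1 h).1

lemma mem_cyl_seg (x : Cantor) (n : ℕ) : x ∈ cyl (seg x n) := by
  induction n with
  | zero => simp
  | succ n ih => rw [seg_succ]; exact mem_cyl_append.2 ⟨ih, by simp⟩

lemma eq_seg_of_mem_cyl {t : List Bool} {x : Cantor} (h : x ∈ cyl t) :
    t = seg x t.length := by
  apply List.ext_get (by simp)
  intro i h1 h2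
  have := h ⟨i, h1⟩
  simp [seg, this]

lemma cyl_eq_union (t : List Bool) :
    cyl t = cyl (t ++ [false]) ∪ cyl (t ++ [true]) := by
  ext x
  simp only [Set.mem_union, mem_cyl_append]
  rcases Bool.dichotomy (x t.length) with h | h
  · tauto
  · tauto

lemma cyl_disjoint {t t' : List Bool} (hlen : t.length = t'.length) (hne : t ≠ t') :
    Disjoint (cyl t) (cyl t') := by
  rw [Set.disjoint_left]
  intro x hx hx'
  apply hne
  rw [eq_seg_of_mem_cyl hx, eq_seg_of_mem_cyl hx', hlen]

lemma isClosed_cyl (t : List Bool) : IsClosed (cyl t) := by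
  have : cyl t = ⋂ i : Fin t.length, (fun x : Cantor => x i.1) ⁻¹' {t.get i} := by
    ext x; simp [cyl]
  rw [this]
  exact isClosed_iInter fun i =>
    IsClosed.preimage (continuous_apply i.1) (isClosed_discrete _)

lemma isOpen_cyl (t : List Bool) : IsOpen (cyl t) := by
  have : cyl t = Set.pi (↑(Finset.range t.length)) (fun i => {b : Bool | ∀ h : i < t.length, b = t.get ⟨i, h⟩}) := by
    ext x
    simp only [Set.mem_pi, Finset.coe_range, Set.mem_Iio, Set.mem_setOf_eq, cyl]
    constructor
    · intro h i hi h'; exact h ⟨i, h'⟩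
    · intro h i; exact h i.1 i.2 i.2
  rw [this]
  exact isOpen_set_pi (Finset.range t.length).finite_toSet
    (fun i _ => isOpen_discrete _)

lemma measurableSet_cyl (t : List Bool) : MeasurableSet (cyl t) :=
  (isClosed_cyl t).measurableSet

lemma exists_cyl_subset {U : Set Cantor} (hU : IsOpen U) {x : Cantor} (hx : x ∈ U) :
    ∃ n, cyl (seg x n) ⊆ U := by
  rcases isOpen_pi_iff.1 hU x hx with ⟨I, u, hu, hsub⟩
  rcases I.bddAbove with ⟨N, hN⟩
  refine ⟨N + 1, fun y hy => hsub ?_⟩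
  intro i hi
  have hiN : i < N + 1 := Nat.lt_succ_of_le (hN hi)
  have : y i = x i := by
    have := hy ⟨i, by simpa using hiN⟩
    simpa [seg] using this
  rw [this]
  exact (hu i hi).2

/-! ### measure lemmas -/

variable {μ : Measure Cantor} [IsProbabilityMeasure μ]

lemma measure_cyl_ne_top (t : List Bool) (V : Set Cantor) : μ (cyl t ∩ V) ≠ ⊤ :=
  (measure_lt_top μ _).ne

lemma measure_cyl_split (V : Set Cantor) (hV : MeasurableSet V) (t : List Bool) :
    (μ (cyl t ∩ V)).toReal
      = (μ (cyl (t ++ [false]) ∩ V)).toReal + (μ (cyl (t ++ [true]) ∩ V)).toReal := by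
  have hd : Disjoint (cyl (t ++ [false]) ∩ V) (cyl (t ++ [true]) ∩ V) :=
    Disjoint.mono Set.inter_subset_left Set.inter_subset_left
      (cyl_disjoint (by simp) (by simp))
  have hu : cyl t ∩ V = (cyl (t ++ [false]) ∩ V) ∪ (cyl (t ++ [true]) ∩ V) := by
    rw [cyl_eq_union t, Set.union_inter_distrib_right]
  rw [hu, measure_union hd ((measurableSet_cyl _).inter hV),
    ENNReal.toReal_add (measure_lt_top μ _).ne (measure_lt_top μ _).ne]

lemma measure_cyl_split' (t : List Bool) :
    (μ (cyl t)).toReal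
      = (μ (cyl (t ++ [false]))).toReal + (μ (cyl (t ++ [true]))).toReal := by
  have := measure_cyl_split (μ := μ) Set.univ MeasurableSet.univ t
  simpa using this

/-! ### run lemmas -/

@[simp] lemma hist_zero (r : Run) : hist r 0 = [] := rfl

lemma hist_succ (r : Run) (n : ℕ) : hist r (n + 1) = hist r n ++ [r n] := by
  simp [hist, List.range_succ]

@[simp] lemma hist_length (r : Run) (n : ℕ) : (hist r n).length = n := by
  simp [hist]

@[simp] lemma path_zero (r : Run) : path r 0 = [] := rfl

lemma path_succ (r : Run) (n : ℕ) : path r (n + 1) = path r n ++ [bits r n] := by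
  simp [path, List.range_succ]

@[simp] lemma path_length (r : Run) (n : ℕ) : (path r n).length = n := by
  simp [path]

lemma path_eq_seg (r : Run) (n : ℕ) : path r n = seg (bits r) n := rfl

lemma map_snd_hist (r : Run) (n : ℕ) : (hist r n).map (·.2) = path r n := by
  simp [hist, path, bits]

lemma sel_eq (r : Run) (n : ℕ) : sel r n = valI r n (bits r n) := rfl


/-! ### the splitting lemma -/

/-- projection matching `valI`'s convention. -/
def pr (b : Bool) (c : ℚ × ℚ) : ℚ := if b then c.2 else c.1

@[simp] lemma pr_false (c : ℚ × ℚ) : pr false c = c.1 := rfl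
@[simp] lemma pr_true (c : ℚ × ℚ) : pr true c = c.2 := rfl

lemma valI_eq_pr (r : Run) (n : ℕ) (b : Bool) : valI r n b = pr b (r n).1 := rfl

/-- real value of a cylinder under a measure -/
noncomputable def nr (ν : Measure Cantor) (t : List Bool) : ℝ := (ν (cyl t)).toReal

lemma nr_nonneg (ν : Measure Cantor) (t : List Bool) : 0 ≤ nr ν t := ENNReal.toReal_nonneg

lemma nr_split (ν : Measure Cantor) [IsFiniteMeasure ν] (t : List Bool) :
    nr ν t = nr ν (t ++ [false]) + nr ν (t ++ [true]) := by
  unfold nr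
  have hd : Disjoint (cyl (t ++ [false])) (cyl (t ++ [true])) :=
    cyl_disjoint (by simp) (by simp)
  rw [cyl_eq_union t, measure_union hd (measurableSet_cyl _),
    ENNReal.toReal_add (measure_lt_top ν _).ne (measure_lt_top ν _).ne]

/-- the specification of a legal split of value `m` at node `t`, relative to measure `ν`. -/
def SplitOK (ν : Measure Cantor) (t : List Bool) (m : ℚ) (c : ℚ × ℚ) : Prop :=
  c.1 + c.2 = m ∧ ∀ b, 0 ≤ pr b c ∧ ((pr b c : ℝ) ≤ nr ν (t ++ [b])) ∧
      (0 < pr b c → (pr b c : ℝ) < nr ν (t ++ [b]))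

/-- Given a node value, we can split it legally between the two children. -/
lemma split_exists (ν : Measure Cantor) [IsFiniteMeasure ν] (t : List Bool) (m : ℚ)
    (h0 : 0 ≤ m) (h2 : 0 < m → (m : ℝ) < nr ν t) :
    ∃ c : ℚ × ℚ, SplitOK ν t m c := by
  rcases h0.lt_or_eq with hm | hm
  · -- 0 < m
    have hlt : (m : ℝ) < nr ν (t ++ [false]) + nr ν (t ++ [true]) := by
      rw [← nr_split]; exact h2 hm
    set a := nr ν (t ++ [false]) with ha
    set b := nr ν (t ++ [true]) with hb
    have ha0 : 0 ≤ a := nr_nonneg _ _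
    have hb0 : 0 ≤ b := nr_nonneg _ _
    have hmR : (0:ℝ) < (m:ℚ) := by exact_mod_cast hm
    rcases ha0.lt_or_eq with hap | hap
    · rcases hb0.lt_or_eq with hbp | hbp
      · -- both positive: pick q ∈ (max 0 (m-b), min m a)
        have hlo : max 0 ((m : ℝ) - b) < min ((m:ℚ):ℝ) a := by
          apply max_lt <;> apply lt_min <;> linarith
        rcases exists_rat_btwn hlo with ⟨q, hq1, hq2⟩
        have hq0 : (0:ℝ) < q := lt_of_le_of_lt (le_max_left _ _) hq1
        have hqmb : (m : ℝ) - b < q := lt_of_le_of_lt (le_max_right _ _) hq1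
        have hqm : (q:ℝ) < (m:ℝ) := lt_of_lt_of_le hq2 (min_le_left _ _)
        have hqa : (q:ℝ) < a := lt_of_lt_of_le hq2 (min_le_right _ _)
        refine ⟨(q, m - q), by ring, ?_⟩
        intro bb
        cases bb
        · refine ⟨by exact_mod_cast hq0.le, by simpa using hqa.le, fun _ => by simpa using hqa⟩
        · refine ⟨by exact_mod_cast (by linarith : (0:ℝ) ≤ (m:ℝ) - (q:ℝ)), ?_, fun _ => ?_⟩
          · simp only [pr_true]; push_cast; linarith
          · simp only [pr_true]; push_cast; linarith
      · -- b = 0 : take (m, 0)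
        refine ⟨(m, 0), by ring, ?_⟩
        intro bb
        cases bb
        · refine ⟨h0, ?_, fun _ => ?_⟩ <;> simp only [pr_false] <;> linarith
        · exact ⟨le_refl 0, by simpa using nr_nonneg ν _, fun h => absurd h (lt_irrefl 0)⟩
    · -- a = 0 : take (0, m)
      refine ⟨(0, m), by ring, ?_⟩
      intro bb
      cases bb
      · exact ⟨le_refl 0, by simpa using nr_nonneg ν _, fun h => absurd h (lt_irrefl 0)⟩
      · refine ⟨h0, ?_, fun _ => ?_⟩ <;> simp only [pr_true] <;> linarith
  · -- m = 0
    refine ⟨(0, 0), by rw [← hm]; ring, ?_⟩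
    intro bb
    cases bb <;>
      exact ⟨le_refl 0, by simpa using nr_nonneg ν _, fun h => absurd h (lt_irrefl 0)⟩

/-- a choice function performing legal splits. -/
noncomputable def splitF (ν : Measure Cantor) [IsFiniteMeasure ν] (t : List Bool) (m : ℚ) : ℚ × ℚ :=
  if h : 0 ≤ m ∧ (0 < m → (m : ℝ) < nr ν t) then
    Classical.choose (split_exists ν t m h.1 h.2)
  else (0, 0)

lemma splitF_spec (ν : Measure Cantor) [IsFiniteMeasure ν] (t : List Bool) (m : ℚ)
    (h0 : 0 ≤ m) (h2 : 0 < m → (m : ℝ) < nr ν t) : SplitOK ν t m (splitF ν t m) := by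
  rw [splitF, dif_pos ⟨h0, h2⟩]
  exact Classical.choose_spec (split_exists ν t m h0 h2)

/-! ### Direction B : a closed subset of `Aᶜ` of measure `> s` gives player I a win -/

def goVal (sp : List Bool → ℚ → ℚ × ℚ) : List Bool → ℚ → List Bool → ℚ
  | _, m, [] => m
  | pre, m, bb :: rest => goVal sp (pre ++ [bb]) (pr bb (sp pre m)) rest

lemma goVal_append (sp : List Bool → ℚ → ℚ × ℚ) (pre : List Bool) (m : ℚ)
    (rest : List Bool) (b : Bool) :
    goVal sp pre m (rest ++ [b]) = pr b (sp (pre ++ rest) (goVal sp pre m rest)) := by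
  induction rest generalizing pre m with
  | nil => simp [goVal]
  | cons c rest ih => simp [goVal, ih, List.append_assoc]

theorem winsI_of_closed {μ : Measure Cantor} [IsProbabilityMeasure μ] {A : Set Cantor} {s : ℝ}
    (hs0 : 0 ≤ s) {F : Set Cantor} (hF : IsClosed F) (hFA : F ⊆ Aᶜ)
    (q0 : ℚ) (hsq : s < (q0 : ℝ)) (hq : (q0 : ℝ) < (μ F).toReal) : WinsI μ s A := by
  classical
  set ν := μ.restrict F with hν
  have hνle : ∀ t, nr ν t ≤ (μ (cyl t)).toReal := by
    intro t
    apply ENNReal.toReal_mono (measure_lt_top μ _).ne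
    rw [hν, Measure.restrict_apply (measurableSet_cyl t)]
    exact measure_mono Set.inter_subset_left
  set val : List Bool → ℚ := goVal (splitF ν) [] q0 with hvaldef
  have val_nil : val [] = q0 := rfl
  have val_append : ∀ t b, val (t ++ [b]) = pr b (splitF ν t (val t)) := by
    intro t b
    rw [hvaldef]
    simpa using goVal_append (splitF ν) [] q0 t b
  have inv : ∀ t, 0 ≤ val t ∧ (0 < val t → (val t : ℝ) < nr ν t) := by
    intro t
    induction t using List.reverseRecOn with
    | nil =>
      refine ⟨by exact_mod_cast (hs0.trans hsq.le), fun _ => ?_⟩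
      rw [val_nil]
      have : nr ν [] = (μ F).toReal := by
        rw [nr, cyl_nil, hν, Measure.restrict_apply_univ]
      rw [this]; exact hq
    | append_singleton t b ih =>
      have spec := splitF_spec ν t (val t) ih.1 ih.2
      have h := spec.2 b
      rw [val_append t b]
      exact ⟨h.1, fun hp => h.2.2 hp⟩
  have hsum : ∀ t, (splitF ν t (val t)).1 + (splitF ν t (val t)).2 = val t := by
    intro t
    exact (splitF_spec ν t (val t) (inv t).1 (inv t).2).1
  refine ⟨fun h => splitF ν (h.map (fun p => p.2)) (val (h.map (fun p => p.2))), ?_⟩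
  intro r hr
  have hmove : ∀ n, (r n).1 = splitF ν (path r n) (val (path r n)) := by
    intro n
    simpa only [map_snd_hist] using hr n
  have hvalI : ∀ n b, valI r n b = val (path r n ++ [b]) := by
    intro n b
    rw [valI_eq_pr, hmove n, val_append]
  have hsel : ∀ n, sel r n = val (path r (n + 1)) := by
    intro n
    rw [sel_eq, hvalI, path_succ]
  have hmOK : ∀ n b, mOK μ r n b := by
    intro n b
    refine ⟨by rw [hvalI]; exact (inv _).1, ?_, ?_⟩
    · rw [hvalI]
      rcases ((inv (path r n ++ [b])).1).lt_or_eq with hp | hp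
      · exact le_trans ((inv _).2 hp).le (hνle _)
      · rw [← hp]; simpa using ENNReal.toReal_nonneg
    · intro hpos
      rw [hvalI]
      rcases ((inv (path r n ++ [b])).1).lt_or_eq with hp | hp
      · exact lt_of_lt_of_le ((inv _).2 hp) (hνle _)
      · rw [← hp]; simpa using hpos
  have hIOK : ∀ n, IOK μ s r n := by
    intro n
    cases n with
    | zero =>
      refine ⟨hmOK 0 false, hmOK 0 true, ?_⟩
      have h1 : (r 0).1.1 + (r 0).1.2 = q0 := by
        rw [hmove 0]; simpa [val_nil] using hsum []
      have : (((r 0).1.1 : ℝ)) + ((r 0).1.2 : ℝ) = (q0 : ℝ) := by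
        exact_mod_cast congrArg (fun q : ℚ => (q : ℝ)) h1
      rw [this]; exact hsq
    | succ n =>
      refine ⟨hmOK _ false, hmOK _ true, ?_⟩
      show (r (n + 1)).1.1 + (r (n + 1)).1.2 = sel r n
      rw [hmove (n + 1), hsel n, hsum]
  intro hWin
  rcases hWin with ⟨n, _, hbad⟩ | ⟨hall, hA⟩
  · exact hbad (hIOK n)
  · set x := bits r with hx
    have hpos : ∀ n, (0 : ℝ) < nr ν (path r (n + 1)) := by
      intro n
      have h2 := (hall n).2
      rw [IIOK, hsel n] at h2
      have : 0 < val (path r (n + 1)) := lt_of_le_of_ne (inv _).1 (Ne.symm h2)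
      calc (0:ℝ) < (val (path r (n+1)) : ℝ) := by exact_mod_cast this
        _ < nr ν (path r (n+1)) := (inv _).2 this
    have hxF : x ∈ F := by
      by_contra hxF
      obtain ⟨N, hsub⟩ := exists_cyl_subset hF.isOpen_compl hxF
      have hsub' : cyl (seg x (N + 1)) ⊆ Fᶜ := by
        refine subset_trans ?_ hsub
        rw [seg_succ]
        exact cyl_append_subset _ _
      have hzero : nr ν (path r (N + 1)) = 0 := by
        rw [nr, hν, Measure.restrict_apply (measurableSet_cyl _), path_eq_seg]
        have : cyl (seg x (N + 1)) ∩ F = ∅ := by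
          rw [Set.eq_empty_iff_forall_notMem]
          intro y ⟨hy1, hy2⟩
          exact hsub' hy1 hy2
        rw [this, measure_empty, ENNReal.toReal_zero]
      have := hpos N
      rw [hzero] at this
      exact lt_irrefl 0 this
    exact (hFA hxF) hA

/-! ### IOK helpers -/

lemma IOK_mOK {μ : Measure Cantor} {s : ℝ} {r : Run} {n : ℕ} (h : IOK μ s r n) (b : Bool) :
    mOK μ r n b := by
  cases n <;> cases b
  · exact h.1
  · exact h.2.1
  · exact h.1
  · exact h.2.1

/-! ### Direction A : open covers of `Aᶜ` of measure `< m∅` give player II a win -/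

def rootSum : List GRound → ℚ × ℚ → ℚ
  | [], mv => mv.1 + mv.2
  | a :: _, _ => a.1.1 + a.1.2

lemma rootSum_eq (r : Run) (n : ℕ) :
    rootSum (hist r n) ((r n).1) = (r 0).1.1 + (r 0).1.2 := by
  cases n with
  | zero => rfl
  | succ n =>
    have : hist r (n + 1) = r 0 :: (List.range n).map (fun i => r (i + 1)) := by
      rw [hist, List.range_succ_eq_map, List.map_cons, List.map_map]
      rfl
    rw [this]
    rfl

theorem winsII_of_open {μ : Measure Cantor} [IsProbabilityMeasure μ] {A : Set Cantor} {s : ℝ}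
    (hU : ∀ q : ℚ, s < (q : ℝ) → ∃ U : Set Cantor, IsOpen U ∧ Aᶜ ⊆ U ∧ (μ U).toReal < (q : ℝ)) :
    WinsII μ s A := by
  classical
  set Ufun : ℚ → Set Cantor := fun q =>
    if h : s < (q : ℝ) then Classical.choose (hU q h) else ∅ with hUfun
  have Uspec : ∀ q : ℚ, s < (q : ℝ) →
      IsOpen (Ufun q) ∧ Aᶜ ⊆ Ufun q ∧ (μ (Ufun q)).toReal < (q : ℝ) := by
    intro q h
    rw [hUfun]
    simp only [dif_pos h]
    exact Classical.choose_spec (hU q h)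
  set τ : StratII := fun h mv =>
    if (μ (cyl ((h.map (fun p => p.2)) ++ [false]) ∩ Ufun (rootSum h mv))).toReal < ((mv.1 : ℚ) : ℝ)
    then false else true with hτ
  refine ⟨τ, ?_⟩
  intro r hr
  set m0 : ℚ := (r 0).1.1 + (r 0).1.2 with hm0
  set U : Set Cantor := Ufun m0 with hUdef
  have hbit : ∀ n, bits r n =
      if (μ (cyl (path r n ++ [false]) ∩ U)).toReal < (((r n).1.1 : ℚ) : ℝ)
      then false else true := by
    intro n
    have := hr n
    rw [hτ] at this
    simp only at this
    rw [bits, this, map_snd_hist, rootSum_eq, ← hm0, ← hUdef]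
  -- the invariant
  have key : ∀ n, (∀ k, k ≤ n → IOK μ s r k) →
      (μ (cyl (path r (n + 1)) ∩ U)).toReal < ((sel r n : ℚ) : ℝ) := by
    intro n
    induction n with
    | zero =>
      intro hok
      have h0 := hok 0 (le_refl 0)
      have hsm : s < ((m0 : ℚ) : ℝ) := by
        have := h0.2.2
        rw [hm0]; push_cast; exact this
      obtain ⟨hUo, hUA, hUm⟩ := Uspec m0 hsm
      have hsplit := measure_cyl_split (μ := μ) U hUo.measurableSet []
      simp only [cyl_nil, Set.univ_inter, List.nil_append] at hsplit
      have hbit0 := hbit 0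
      rw [path_zero, List.nil_append] at hbit0
      by_cases hc : (μ (cyl [false] ∩ U)).toReal < (((r 0).1.1 : ℚ) : ℝ)
      · rw [if_pos hc] at hbit0
        rw [path_succ, path_zero, List.nil_append, sel_eq, hbit0]
        simpa [valI] using hc
      · rw [if_neg hc] at hbit0
        push_neg at hc
        rw [path_succ, path_zero, List.nil_append, sel_eq, hbit0]
        have : ((m0 : ℚ) : ℝ) = ((r 0).1.1 : ℝ) + ((r 0).1.2 : ℝ) := by
          rw [hm0]; push_cast; ring
        simp only [valI, if_true]
        linarith [hUm, hsplit, hc]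
    | succ n ih =>
      intro hok
      have ihh := ih (fun k hk => hok k (hk.trans (Nat.le_succ n)))
      have hsum : (r (n + 1)).1.1 + (r (n + 1)).1.2 = sel r n := (hok (n + 1) (le_refl _)).2.2
      have h0 := hok 0 (Nat.zero_le _)
      have hsm : s < ((m0 : ℚ) : ℝ) := by
        have := h0.2.2
        rw [hm0]; push_cast; exact this
      obtain ⟨hUo, hUA, hUm⟩ := Uspec m0 hsm
      have hsplit := measure_cyl_split (μ := μ) U hUo.measurableSet (path r (n + 1))
      have hbitn := hbit (n + 1)
      by_cases hc : (μ (cyl (path r (n + 1) ++ [false]) ∩ U)).toReal < (((r (n+1)).1.1 : ℚ) : ℝ)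
      · rw [if_pos hc] at hbitn
        rw [path_succ (r := r) (n := n + 1), sel_eq, hbitn]
        simpa [valI] using hc
      · rw [if_neg hc] at hbitn
        push_neg at hc
        rw [path_succ (r := r) (n := n + 1), sel_eq, hbitn]
        have hsumR : ((sel r n : ℚ) : ℝ) = ((r (n+1)).1.1 : ℝ) + ((r (n+1)).1.2 : ℝ) := by
          rw [← hsum]; push_cast; ring
        simp only [valI, if_true]
        linarith [ihh, hsplit, hc]
  -- II's moves are always legal while I plays legally
  have hIIOK : ∀ n, (∀ k, k ≤ n → IOK μ s r k) → IIOK r n := by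
    intro n hok
    have := key n hok
    rw [IIOK]
    intro hz
    rw [hz] at this
    simp only [Rat.cast_zero] at this
    exact absurd this (not_lt.2 ENNReal.toReal_nonneg)
  by_cases hall : ∀ n, IOK μ s r n
  · -- all of I's moves legal: II plays legally and wins into A
    have h0 := hall 0
    have hsm : s < ((m0 : ℚ) : ℝ) := by
      have := h0.2.2
      rw [hm0]; push_cast; exact this
    obtain ⟨hUo, hUA, hUm⟩ := Uspec m0 hsm
    refine Or.inr ⟨fun n => ⟨hall n, hIIOK n (fun k _ => hall k)⟩, ?_⟩
    -- bits r ∈ A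
    by_contra hxA
    have hxU : bits r ∈ U := hUA hxA
    obtain ⟨N, hsub⟩ := exists_cyl_subset hUo hxU
    have hsubset : cyl (path r (N + 1)) ⊆ U := by
      rw [path_eq_seg]
      intro y hy
      apply hsub
      have : seg (bits r) (N + 1) = seg (bits r) N ++ [bits r N] := seg_succ _ _
      rw [this] at hy
      exact cyl_append_subset _ _ hy
    have hinter : cyl (path r (N + 1)) ∩ U = cyl (path r (N + 1)) :=
      Set.inter_eq_left.2 hsubset
    have hk := key N (fun k _ => hall k)
    rw [hinter] at hk
    -- but mOK says sel r N ≤ μ (cyl (path r (N+1)))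
    have hmok : mOK μ r N (bits r N) := IOK_mOK (hall N) _
    have hle := hmok.2.1
    rw [← path_succ] at hle
    rw [sel_eq] at hk
    exact absurd hk (not_lt.2 hle)
  · -- I violates first
    push_neg at hall
    have hex : ∃ n, ¬ IOK μ s r n := hall
    set n0 := Nat.find hex with hn0
    refine Or.inl ⟨n0, fun m hm => ⟨?_, ?_⟩, Nat.find_spec hex⟩
    · by_contra hbad
      have h1 : Nat.find hex ≤ m := Nat.find_le hbad
      rw [← hn0] at h1
      omega
    · apply hIIOK
      intro k hk
      by_contra hbad
      have h1 : Nat.find hex ≤ k := Nat.find_le hbad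
      rw [← hn0] at h1
      omega

lemma eq_nil_or_append {α : Type*} (t : List α) : t = [] ∨ ∃ u b, t = u ++ [b] := by
  rcases List.eq_nil_or_concat t with h | ⟨u, b, h⟩
  · exact Or.inl h
  · exact Or.inr ⟨u, b, by rw [h, List.concat_eq_append]⟩

/-! ### Direction C : if player I wins, `Aᶜ` has a closed subset of measure `> s` -/

/-- canonical extension of a finite string to an element of Cantor space -/
def ext (t : List Bool) : Cantor := fun i => t.getD i false

lemma seg_ext_take (t : List Bool) (k : ℕ) (hk : k ≤ t.length) :
    seg (ext t) k = t.take k := by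
  apply List.ext_get (by simp [hk])
  intro i h1 h2
  have hi : i < t.length := by simp at h1; omega
  simp only [seg, List.get_eq_getElem, List.getElem_map, List.getElem_range, List.getElem_take]
  rw [ext]
  exact List.getD_eq_getElem t false hi

lemma seg_ext (t : List Bool) : seg (ext t) t.length = t := by
  rw [seg_ext_take t t.length (le_refl _), List.take_length]

lemma seg_take (x : Cantor) (k n : ℕ) (h : k ≤ n) : (seg x n).take k = seg x k := by
  apply List.ext_get (by simp; omega)
  intro i h1 h2
  simp [seg]

section DirC

variable (σ : StratI)

/-- the history after `n` rounds when I follows `σ` and II plays the bits of `x`. -/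
def Hx (x : Cantor) : ℕ → List GRound
  | 0 => []
  | n + 1 => Hx x n ++ [(σ (Hx x n), x n)]

/-- the run when I follows `σ` and II plays the bits of `x`. -/
def rxr (x : Cantor) : Run := fun n => (σ (Hx σ x n), x n)

lemma hist_rxr (x : Cantor) (n : ℕ) : hist (rxr σ x) n = Hx σ x n := by
  induction n with
  | zero => rfl
  | succ n ih => rw [hist_succ, ih]; rfl

lemma consI_rxr (x : Cantor) : ConsI σ (rxr σ x) := by
  intro n
  rw [hist_rxr]
  rfl

@[simp] lemma bits_rxr (x : Cantor) (n : ℕ) : bits (rxr σ x) n = x n := rfl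

lemma path_rxr (x : Cantor) (n : ℕ) : path (rxr σ x) n = seg x n := rfl

lemma Hx_congr (x y : Cantor) (n : ℕ) (h : ∀ i, i < n → x i = y i) :
    Hx σ x n = Hx σ y n := by
  induction n with
  | zero => rfl
  | succ n ih =>
    have h1 := ih (fun i hi => h i (hi.trans (Nat.lt_succ_self n)))
    show Hx σ x n ++ _ = Hx σ y n ++ _
    rw [h1, h n (Nat.lt_succ_self n)]

/-- history at a finite node -/
def Ht (t : List Bool) : List GRound := Hx σ (ext t) t.length

lemma Hx_eq_Ht (x : Cantor) (n : ℕ) : Hx σ x n = Ht σ (seg x n) := by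
  rw [Ht]
  have : (seg x n).length = n := by simp
  rw [this]
  apply Hx_congr
  intro i hi
  rw [ext, seg, List.getD_eq_getElem _ _ (by simp; omega)]
  simp [hi]

/-- value attached by `σ` to a node (for `[]`, the sum of the first move). -/
def nvalR : List Bool → ℚ
  | [] => (σ []).1 + (σ []).2
  | b :: u => pr b (σ (Ht σ u.reverse))

def nval (t : List Bool) : ℚ := nvalR σ t.reverse

@[simp] lemma nval_nil : nval σ [] = (σ []).1 + (σ []).2 := rfl

lemma nval_append (t : List Bool) (b : Bool) :
    nval σ (t ++ [b]) = pr b (σ (Ht σ t)) := by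
  rw [nval, List.reverse_append]
  simp [nvalR]

lemma sel_rxr (x : Cantor) (n : ℕ) : sel (rxr σ x) n = nval σ (seg x (n + 1)) := by
  rw [sel_eq, valI_eq_pr, seg_succ, nval_append, ← Hx_eq_Ht]
  rfl

lemma valI_rxr (x : Cantor) (n : ℕ) (b : Bool) :
    valI (rxr σ x) n b = nval σ (seg x n ++ [b]) := by
  rw [valI_eq_pr, nval_append, ← Hx_eq_Ht]
  rfl

/-- a node is live if every nonempty prefix carries a nonzero value. -/
def Live (t : List Bool) : Prop := ∀ k, k < t.length → nval σ (t.take (k + 1)) ≠ 0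

lemma live_nil : Live σ [] := fun k hk => absurd hk (by simp)

lemma live_append (t : List Bool) (b : Bool) :
    Live σ (t ++ [b]) ↔ Live σ t ∧ nval σ (t ++ [b]) ≠ 0 := by
  constructor
  · intro h
    constructor
    · intro k hk
      have h2 := h k (by simp; omega)
      rw [List.take_append, show k + 1 - t.length = 0 from by omega,
        List.take_zero, List.append_nil] at h2
      exact h2
    · have h2 := h t.length (by simp)
      rw [List.take_append, List.take_of_length_le (by omega),
        show t.length + 1 - t.length = 1 from by omega] at h2
      simpa using h2
  · rintro ⟨h1, h2⟩ k hk
    simp only [List.length_append, List.length_singleton] at hk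
    rcases Nat.lt_succ_iff_lt_or_eq.1 hk with hk' | hk'
    · rw [List.take_append, show k + 1 - t.length = 0 from by omega, List.take_zero,
        List.append_nil]
      exact h1 k hk'
    · rw [hk', List.take_append, List.take_of_length_le (by omega),
        show t.length + 1 - t.length = 1 from by omega]
      simpa using h2

end DirC

lemma IOK_upto {μ : Measure Cantor} {s : ℝ} {A : Set Cantor} {σ : StratI}
    (hσ : ∀ r : Run, ConsI σ r → ¬ IIWinsRun μ s A r) {r : Run} (hr : ConsI σ r)
    {n : ℕ} (hII : ∀ m, m < n → IIOK r m) : ∀ k, k ≤ n → IOK μ s r k := by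
  classical
  intro k hk
  by_contra hbad
  have hex : ∃ j, ¬ IOK μ s r j := ⟨k, hbad⟩
  have hle : Nat.find hex ≤ k := Nat.find_le hbad
  apply hσ r hr
  left
  exact ⟨Nat.find hex, fun m hm => ⟨not_not.1 (Nat.find_min hex hm), hII m (by omega)⟩,
    Nat.find_spec hex⟩

lemma live_facts {μ : Measure Cantor} [IsProbabilityMeasure μ] {s : ℝ} {A : Set Cantor} {σ : StratI}
    (hs0 : 0 ≤ s)
    (hσ : ∀ r : Run, ConsI σ r → ¬ IIWinsRun μ s A r) {t : List Bool} (ht : Live σ t) :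
    (0 ≤ nval σ t ∧ ((nval σ t : ℝ)) ≤ (μ (cyl t)).toReal) ∧
      nval σ (t ++ [false]) + nval σ (t ++ [true]) = nval σ t := by
  set x := ext t with hx
  set r := rxr σ x with hrdef
  have hII : ∀ m, m < t.length → IIOK r m := by
    intro m hm
    rw [IIOK, hrdef, sel_rxr, hx, seg_ext_take t (m+1) (by omega)]
    exact ht m hm
  have hIOK : ∀ k, k ≤ t.length → IOK μ s r k := IOK_upto hσ (consI_rxr σ x) hII
  have hseg : seg x t.length = t := seg_ext t
  constructor
  · rcases eq_nil_or_append t with rfl | ⟨u, b, rfl⟩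
    · -- t = []
      have h0 := hIOK 0 (le_refl 0)
      have hslt : s < ((σ []).1 : ℝ) + ((σ []).2 : ℝ) := by
        have := h0.2.2
        have hr0 : (r 0).1 = σ [] := by rw [hrdef]; rfl
        rwa [hr0] at this
      constructor
      · rw [nval_nil]
        have : (0:ℝ) < ((σ []).1 : ℝ) + ((σ []).2 : ℝ) := lt_of_le_of_lt hs0 hslt
        exact_mod_cast this.le
      · -- nval [] ≤ μ (cyl [])
        have hm0 := (IOK_mOK h0 false).2.1
        have hm1 := (IOK_mOK h0 true).2.1
        have hv0 : valI r 0 false = nval σ [(false : Bool)] := by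
          rw [hrdef, valI_rxr]; rfl
        have hv1 : valI r 0 true = nval σ [(true : Bool)] := by
          rw [hrdef, valI_rxr]; rfl
        rw [hv0] at hm0
        rw [hv1] at hm1
        have hp0 : path r 0 = [] := path_zero r
        rw [hp0] at hm0 hm1
        have hnn : nval σ [] = nval σ [(false:Bool)] + nval σ [(true:Bool)] := rfl
        rw [measure_cyl_split' ([] : List Bool), hnn]
        push_cast
        simp only [List.nil_append] at hm0 hm1 ⊢
        linarith
    · -- t = u ++ [b]
      have hlen : (u ++ [b]).length = u.length + 1 := by simp
      have hk := hIOK u.length (by omega)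
      have hm := (IOK_mOK hk b).2.1
      have hm' := (IOK_mOK hk b).1
      have hpath : path r u.length = u := by
        rw [hrdef, path_rxr, hx, seg_ext_take _ _ (by simp), List.take_left]
      have hv : valI r u.length b = nval σ (u ++ [b]) := by
        rw [hrdef, valI_rxr, hx, seg_ext_take _ _ (by simp), List.take_left]
      rw [hv] at hm hm'
      rw [hpath] at hm
      exact ⟨hm', hm⟩
  · rcases eq_nil_or_append t with rfl | ⟨u, b, rfl⟩
    · rfl
    · have hlen : (u ++ [b]).length = u.length + 1 := by simp
      have hk := hIOK (u.length + 1) (by omega)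
      have hsum := hk.2.2
      have hmv : (r (u.length + 1)).1 = σ (Ht σ (u ++ [b])) := by
        rw [hrdef]
        show σ (Hx σ x (u.length + 1)) = _
        rw [Hx_eq_Ht, hx]
        congr 1
        rw [← hlen, seg_ext]
      have hsel : sel r u.length = nval σ (u ++ [b]) := by
        rw [hrdef, sel_rxr, hx, ← hlen, seg_ext]
      rw [hmv, hsel] at hsum
      rw [nval_append, nval_append]
      exact hsum

open Classical in
noncomputable def strsF : ℕ → Finset (List Bool)
  | 0 => {[]}
  | n + 1 => (strsF n).biUnion (fun t => {t ++ [false], t ++ [true]})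

lemma mem_strsF {n : ℕ} {t : List Bool} : t ∈ strsF n ↔ t.length = n := by
  induction n generalizing t with
  | zero => simp [strsF, List.length_eq_zero_iff]
  | succ n ih =>
    rw [strsF, Finset.mem_biUnion]
    constructor
    · rintro ⟨u, hu, hmem⟩
      rcases Finset.mem_insert.1 hmem with rfl | hmem
      · simp [ih.1 hu]
      · rw [Finset.mem_singleton] at hmem
        subst hmem
        simp [ih.1 hu]
    · intro hlen
      rcases eq_nil_or_append t with rfl | ⟨u, b, rfl⟩
      · simp at hlen
      · refine ⟨u, ih.2 (by simp at hlen; omega), ?_⟩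
        cases b
        · exact Finset.mem_insert_self _ _
        · exact Finset.mem_insert_of_mem (Finset.mem_singleton_self _)

open Classical in
noncomputable def liveF (σ : StratI) (n : ℕ) : Finset (List Bool) :=
  (strsF n).filter (fun t => Live σ t)

lemma mem_liveF {σ : StratI} {n : ℕ} {t : List Bool} :
    t ∈ liveF σ n ↔ t.length = n ∧ Live σ t := by
  classical
  rw [liveF, Finset.mem_filter, mem_strsF]

theorem exists_closed_of_winsI {μ : Measure Cantor} [IsProbabilityMeasure μ] {A : Set Cantor}
    {s : ℝ} (hs0 : 0 ≤ s) (σ : StratI)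
    (hσ : ∀ r : Run, ConsI σ r → ¬ IIWinsRun μ s A r) :
    ∃ F : Set Cantor, IsClosed F ∧ F ⊆ Aᶜ ∧ s < (μ F).toReal := by
  classical
  -- level sums of live values are constant
  have hsum_level : ∀ n, ∑ t ∈ liveF σ n, ((nval σ t : ℝ)) = (nval σ [] : ℝ) := by
    intro n
    induction n with
    | zero =>
      have : liveF σ 0 = {[]} := by
        apply Finset.ext
        intro t
        rw [mem_liveF, Finset.mem_singleton]
        constructor
        · rintro ⟨h, _⟩
          exact List.length_eq_zero_iff.1 h
        · rintro rfl
          exact ⟨rfl, live_nil σ⟩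
      rw [this, Finset.sum_singleton]
    | succ n ih =>
      have hdecomp : liveF σ (n + 1)
          = (liveF σ n).biUnion (fun t => ({t ++ [false], t ++ [true]} : Finset _).filter (fun t' => Live σ t')) := by
        apply Finset.ext
        intro t'
        rw [mem_liveF, Finset.mem_biUnion]
        constructor
        · rintro ⟨hlen, hlive⟩
          rcases eq_nil_or_append t' with rfl | ⟨u, b, rfl⟩
          · simp at hlen
          · have hub := (live_append σ u b).1 hlive
            refine ⟨u, mem_liveF.2 ⟨by simp at hlen; omega, hub.1⟩, ?_⟩
            rw [Finset.mem_filter]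
            refine ⟨?_, by convert hlive⟩
            cases b
            · exact Finset.mem_insert_self _ _
            · exact Finset.mem_insert_of_mem (Finset.mem_singleton_self _)
        · rintro ⟨u, hu, hmem⟩
          rw [Finset.mem_filter] at hmem
          obtain ⟨hu1, hu2⟩ := mem_liveF.1 hu
          have hlive : Live σ t' := by convert hmem.2
          rcases Finset.mem_insert.1 hmem.1 with rfl | hm
          · exact ⟨by simp [hu1], hlive⟩
          · rw [Finset.mem_singleton] at hm
            subst hm
            exact ⟨by simp [hu1], hlive⟩
      rw [hdecomp, Finset.sum_biUnion]
      · rw [← ih]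
        apply Finset.sum_congr rfl
        intro t ht
        obtain ⟨hlen, hlive⟩ := mem_liveF.1 ht
        have hne : t ++ [false] ≠ t ++ [true] := by simp
        rw [Finset.sum_filter, Finset.sum_pair hne]
        have hval : ∀ b : Bool, (if Live σ (t ++ [b]) then ((nval σ (t ++ [b]) : ℝ)) else 0)
            = ((nval σ (t ++ [b]) : ℝ)) := by
          intro b
          by_cases hb : Live σ (t ++ [b])
          · rw [if_pos hb]
          · rw [if_neg hb]
            have : ¬ (Live σ t ∧ nval σ (t ++ [b]) ≠ 0) := fun hc => hb ((live_append σ t b).2 hc)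
            push_neg at this
            rw [this hlive]
            simp
        rw [hval false, hval true]
        have := (live_facts hs0 hσ hlive).2
        push_cast [← this]
        ring
      · -- pairwise disjointness
        intro t1 h1 t2 h2 hne
        apply Finset.disjoint_left.2
        intro t' ht1 ht2
        rw [Finset.mem_coe, mem_liveF] at h1 h2
        rw [Finset.mem_filter] at ht1 ht2
        apply hne
        have e1 : t'.dropLast = t1 := by
          rcases Finset.mem_insert.1 ht1.1 with rfl | hm
          · simp
          · rw [Finset.mem_singleton] at hm; subst hm; simp
        have e2 : t'.dropLast = t2 := by
          rcases Finset.mem_insert.1 ht2.1 with rfl | hm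
          · simp
          · rw [Finset.mem_singleton] at hm; subst hm; simp
        rw [← e1, ← e2]
  -- the covers
  set C : ℕ → Set Cantor := fun n => ⋃ t ∈ liveF σ n, cyl t with hC
  have hCmeas : ∀ n, MeasurableSet (C n) := by
    intro n
    exact MeasurableSet.biUnion (Finset.countable_toSet _) (fun t _ => measurableSet_cyl t)
  have hCmeasure : ∀ n, (nval σ [] : ℝ) ≤ (μ (C n)).toReal := by
    intro n
    have hdisj : Set.Pairwise ↑(liveF σ n) (Function.onFun Disjoint fun t => cyl t) := by
      intro t1 h1 t2 h2 hne
      rw [Finset.mem_coe, mem_liveF] at h1 h2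
      exact cyl_disjoint (h1.1.trans h2.1.symm) hne
    have := measure_biUnion_finset (μ := μ) hdisj (fun t _ => measurableSet_cyl t)
    rw [hC]
    simp only []
    rw [this, ENNReal.toReal_sum (fun t _ => (measure_lt_top μ _).ne)]
    rw [← hsum_level n]
    apply Finset.sum_le_sum
    intro t ht
    exact ((live_facts hs0 hσ (mem_liveF.1 ht).2).1).2
  have hanti : Antitone C := by
    apply antitone_nat_of_succ_le
    intro n
    rw [hC]
    intro x hx
    simp only [Set.mem_iUnion] at hx ⊢
    obtain ⟨t, ht, hxt⟩ := hx
    obtain ⟨hlen, hlive⟩ := mem_liveF.1 ht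
    rcases eq_nil_or_append t with rfl | ⟨u, b, rfl⟩
    · simp at hlen
    · refine ⟨u, mem_liveF.2 ⟨by simp at hlen; omega, ((live_append σ u b).1 hlive).1⟩, ?_⟩
      exact cyl_append_subset u b hxt
  set F : Set Cantor := ⋂ n, C n with hF
  refine ⟨F, ?_, ?_, ?_⟩
  · apply isClosed_iInter
    intro n
    exact Set.Finite.isClosed_biUnion (Finset.finite_toSet _) (fun t _ => isClosed_cyl t)
  · -- F ⊆ Aᶜ
    intro x hx
    have hlive : ∀ n, Live σ (seg x n) := by
      intro n
      have hxC : x ∈ C n := Set.mem_iInter.1 hx n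
      rw [hC] at hxC
      simp only [Set.mem_iUnion] at hxC
      obtain ⟨t, ht, hxt⟩ := hxC
      obtain ⟨hlen, hl⟩ := mem_liveF.1 ht
      have : t = seg x n := by
        have := eq_seg_of_mem_cyl hxt
        rwa [hlen] at this
      rwa [← this]
    set r := rxr σ x with hrdef
    have hII : ∀ m, IIOK r m := by
      intro m
      rw [IIOK, hrdef, sel_rxr]
      have := hlive (m + 1) m (by simp)
      rwa [List.take_of_length_le (by simp)] at this
    have hIOK : ∀ k, IOK μ s r k :=
      fun k => IOK_upto hσ (consI_rxr σ x) (fun m _ => hII m) k (le_refl k)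
    intro hxA
    apply hσ r (consI_rxr σ x)
    right
    refine ⟨fun n => ⟨hIOK n, hII n⟩, ?_⟩
    have : bits r = x := funext (fun n => bits_rxr σ x n)
    rwa [this]
  · -- measure
    have h0 : s < (nval σ [] : ℝ) := by
      set x := ext [] with hx
      have h0 := IOK_upto hσ (consI_rxr σ x) (n := 0) (fun m hm => absurd hm (Nat.not_lt_zero m)) 0 (le_refl 0)
      have := h0.2.2
      have hr0 : (rxr σ x 0).1 = σ [] := rfl
      rw [hr0] at this
      rw [nval_nil]
      push_cast
      exact this
    have htend := tendsto_measure_iInter_atTop (μ := μ)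
      (fun n => (hCmeas n).nullMeasurableSet) hanti ⟨0, (measure_lt_top μ _).ne⟩
    have htoReal : Filter.Tendsto (fun n => (μ (C n)).toReal) Filter.atTop (nhds (μ F).toReal) :=
      (ENNReal.tendsto_toReal (measure_lt_top μ _).ne).comp htend
    have hle : (nval σ [] : ℝ) ≤ (μ F).toReal := ge_of_tendsto' htoReal hCmeasure
    exact lt_of_lt_of_le h0 hle

/-! ### Direction D : infrastructure on histories -/

lemma hist_getElem (r : Run) (n m : ℕ) (hm : m < n) :
    (hist r n)[m]'(by simp [hist]; omega) = r m := by
  simp [hist]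

lemma hist_take (r : Run) {m n : ℕ} (h : m ≤ n) : (hist r n).take m = hist r m := by
  rw [hist, hist, ← List.map_take, List.take_range, Nat.min_eq_left h]

lemma run_eq_of_hist {r1 r2 : Run} {n : ℕ} (h : hist r1 n = hist r2 n) :
    ∀ m, m < n → r1 m = r2 m := by
  intro m hm
  rw [← hist_getElem r1 n m hm, ← hist_getElem r2 n m hm]
  exact List.getElem_of_eq h _

lemma path_congr {r1 r2 : Run} {n : ℕ} (h : ∀ m, m < n → r1 m = r2 m) :
    ∀ k, k ≤ n → path r1 k = path r2 k := by
  intro k hk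
  rw [path, path]
  apply List.map_congr_left
  intro a ha
  rw [List.mem_range] at ha
  rw [bits, bits, h a (by omega)]

lemma mOK_congr {μ : Measure Cantor} {r1 r2 : Run} {n : ℕ}
    (h : ∀ m, m ≤ n → r1 m = r2 m) (b : Bool) : mOK μ r1 n b ↔ mOK μ r2 n b := by
  have hv : valI r1 n b = valI r2 n b := by
    rw [valI, valI, h n (le_refl n)]
  have hp : path r1 n = path r2 n :=
    path_congr (fun m hm => h m (by omega)) n (le_refl n)
  rw [mOK, mOK, hv, hp]

lemma sel_congr {r1 r2 : Run} {n : ℕ} (h : r1 n = r2 n) : sel r1 n = sel r2 n := by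
  rw [sel, sel, valI, valI, bits, bits, h]

lemma IOK_congr {μ : Measure Cantor} {s : ℝ} {r1 r2 : Run} {n : ℕ}
    (h : ∀ m, m ≤ n → r1 m = r2 m) : IOK μ s r1 n ↔ IOK μ s r2 n := by
  cases n with
  | zero =>
    rw [IOK, IOK, mOK_congr h false, mOK_congr h true, h 0 (le_refl 0)]
  | succ n =>
    rw [IOK, IOK, mOK_congr h false, mOK_congr h true, h (n+1) (le_refl _),
      sel_congr (h n (by omega))]

lemma IIOK_congr {r1 r2 : Run} {n : ℕ} (h : r1 n = r2 n) : IIOK r1 n ↔ IIOK r2 n := by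
  rw [IIOK, IIOK, sel_congr h]

/-- a history is consistent with II's strategy `τ`. -/
def ConsHist (τ : StratII) (h : List GRound) : Prop :=
  ∀ i (hi : i < h.length), (h[i]'hi).2 = τ (h.take i) (h[i]'hi).1

/-- all rounds recorded in a history are legal. -/
def HistOK (μ : Measure Cantor) (s : ℝ) (h : List GRound) : Prop :=
  ∀ r : Run, hist r h.length = h → ∀ m, m < h.length → IOK μ s r m ∧ IIOK r m

lemma consHist_nil (τ : StratII) : ConsHist τ [] := by
  intro i hi
  simp at hi

lemma histOK_nil (μ : Measure Cantor) (s : ℝ) : HistOK μ s [] := by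
  intro r _ m hm
  simp at hm

lemma consHist_append {τ : StratII} {h : List GRound} (hc : ConsHist τ h) (mv : ℚ × ℚ) :
    ConsHist τ (h ++ [(mv, τ h mv)]) := by
  intro i hi
  simp only [List.length_append, List.length_singleton] at hi
  rcases Nat.lt_succ_iff_lt_or_eq.1 hi with hi' | hi'
  · rw [List.getElem_append_left hi', List.take_append,
      show i - h.length = 0 from by omega, List.take_zero, List.append_nil]
    exact hc i hi'
  · subst hi'
    rw [List.getElem_append_right (le_refl _)]
    simp [List.take_left]

/-- the last move recorded in a history. -/
def lastP (h : List GRound) : GRound := h.getD (h.length - 1) default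

@[simp] lemma lastP_append (h : List GRound) (a : GRound) : lastP (h ++ [a]) = a := by
  rw [lastP]
  simp only [List.length_append, List.length_singleton, Nat.add_sub_cancel]
  rw [List.getD_eq_getElem _ _ (by simp)]
  simp

/-- the mass of a history (its selected value), with the root mass `q0` for `[]`. -/
def massOf (q0 : ℚ) (h : List GRound) : ℚ :=
  if h.length = 0 then q0 else pr (lastP h).2 (lastP h).1

@[simp] lemma massOf_nil (q0 : ℚ) : massOf q0 [] = q0 := rfl

lemma massOf_append (q0 : ℚ) (h : List GRound) (a : GRound) :
    massOf q0 (h ++ [a]) = pr a.2 a.1 := by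
  rw [massOf, if_neg (by simp), lastP_append]

lemma sel_hist {r : Run} {n : ℕ} {h : List GRound} (hh : hist r (n + 1) = h) (q0 : ℚ) :
    sel r n = massOf q0 h := by
  have hlen : h.length = n + 1 := by rw [← hh]; simp
  have : r n = lastP h := by
    rw [← hh, lastP, hist_length, Nat.add_sub_cancel,
      List.getD_eq_getElem _ _ (by simp), hist_getElem r (n+1) n (by omega)]
  rw [massOf, if_neg (by omega), sel, valI, bits, this]
  rfl

/-- the node (binary string) of a history. -/
def nodeOf (h : List GRound) : List Bool := h.map (fun p => p.2)

@[simp] lemma nodeOf_nil : nodeOf [] = [] := rfl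

lemma nodeOf_append (h : List GRound) (a : GRound) :
    nodeOf (h ++ [a]) = nodeOf h ++ [a.2] := by
  simp [nodeOf]

@[simp] lemma nodeOf_length (h : List GRound) : (nodeOf h).length = h.length := by
  simp [nodeOf]

lemma path_eq_nodeOf {r : Run} {n : ℕ} {h : List GRound} (hh : hist r n = h) :
    path r n = nodeOf h := by
  rw [← hh, nodeOf, map_snd_hist]

/-! ### Direction D : positions, legal moves, continuation runs -/

/-- all of player I's moves recorded in a history are legal. -/
def HistIOK (μ : Measure Cantor) (s : ℝ) (h : List GRound) : Prop :=
  ∀ r : Run, hist r h.length = h → ∀ m, m < h.length → IOK μ s r m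

/-- a legal move for player I at the position `h`, with current mass `m`. -/
def LegalMv (μ : Measure Cantor) (h : List GRound) (m : ℚ) (mv : ℚ × ℚ) : Prop :=
  mv.1 + mv.2 = m ∧ ∀ b, 0 ≤ pr b mv ∧
    ((pr b mv : ℝ) ≤ (μ (cyl (nodeOf h ++ [b]))).toReal) ∧
    (0 < (μ (cyl (nodeOf h ++ [b]))).toReal → (pr b mv : ℝ) < (μ (cyl (nodeOf h ++ [b]))).toReal)

/-- a good position for the construction -/
def Good (μ : Measure Cantor) (s : ℝ) (τ : StratII) (q0 : ℚ) (h : List GRound) : Prop :=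
  ConsHist τ h ∧ HistIOK μ s h ∧ 0 < massOf q0 h ∧
    ((massOf q0 h : ℝ) < (μ (cyl (nodeOf h))).toReal)

lemma good_nil {μ : Measure Cantor} [IsProbabilityMeasure μ] {s : ℝ} {τ : StratII} {q0 : ℚ}
    (hq0 : 0 < q0) (hq1 : (q0 : ℝ) < 1) : Good μ s τ q0 [] := by
  refine ⟨consHist_nil τ, fun r _ m hm => by simp at hm, hq0, ?_⟩
  rw [massOf_nil, nodeOf_nil, cyl_nil, measure_univ, ENNReal.toReal_one]
  exact hq1

lemma hist_take_of_append {r : Run} {h : List GRound} {a : GRound}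
    (hr : hist r (h.length + 1) = h ++ [a]) : hist r h.length = h := by
  rw [← hist_take r (Nat.le_succ h.length), hr, List.take_left]

lemma IOK_of_legal {μ : Measure Cantor} {s : ℝ} {τ : StratII} {q0 : ℚ}
    {h : List GRound} {mv : ℚ × ℚ} {b : Bool} {r : Run}
    (hGood : Good μ s τ q0 h) (hsq0 : s < (q0 : ℝ))
    (hmv : LegalMv μ h (massOf q0 h) mv)
    (hr : hist r (h.length + 1) = h ++ [(mv, b)]) : IOK μ s r h.length := by
  have hrn : r h.length = (mv, b) := by
    calc r h.length = (hist r (h.length + 1))[h.length]'(by simp) :=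
          (hist_getElem r (h.length + 1) h.length (by omega)).symm
      _ = (h ++ [(mv, b)])[h.length]'(by simp) := List.getElem_of_eq hr _
      _ = (mv, b) := by simp
  have hh : hist r h.length = h := hist_take_of_append hr
  have hpath : path r h.length = nodeOf h := path_eq_nodeOf hh
  have hmOK : ∀ b', mOK μ r h.length b' := by
    intro b'
    have hv : valI r h.length b' = pr b' mv := by rw [valI_eq_pr, hrn]
    rw [mOK, hv, hpath]
    exact hmv.2 b'
  rcases Nat.eq_zero_or_eq_succ_pred h.length with hlen | hlen
  · have hnil : h = [] := List.length_eq_zero_iff.1 hlen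
    rw [hlen]
    refine ⟨by rw [← hlen]; exact hmOK false, by rw [← hlen]; exact hmOK true, ?_⟩
    have hr0 : r 0 = (mv, b) := by rw [← hlen]; exact hrn
    have hsum : mv.1 + mv.2 = q0 := by
      have := hmv.1
      rwa [hnil, massOf_nil] at this
    rw [hr0]
    show s < ((mv.1 : ℝ)) + ((mv.2 : ℝ))
    have : ((mv.1 : ℝ)) + ((mv.2 : ℝ)) = ((q0 : ℚ) : ℝ) := by exact_mod_cast hsum
    rw [this]
    exact hsq0
  · set n := h.length - 1 with hn
    have hlen' : h.length = n + 1 := hlen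
    rw [hlen']
    refine ⟨by rw [← hlen']; exact hmOK false, by rw [← hlen']; exact hmOK true, ?_⟩
    have hrn' : r (n + 1) = (mv, b) := by rw [← hlen']; exact hrn
    have hsel : sel r n = massOf q0 h := by
      apply sel_hist
      rw [← hlen']
      exact hh
    rw [hrn', hsel]
    exact hmv.1

lemma histIOK_append {μ : Measure Cantor} {s : ℝ} {τ : StratII} {q0 : ℚ}
    {h : List GRound} {mv : ℚ × ℚ} {b : Bool}
    (hGood : Good μ s τ q0 h) (hsq0 : s < (q0 : ℝ))
    (hmv : LegalMv μ h (massOf q0 h) mv) : HistIOK μ s (h ++ [(mv, b)]) := by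
  intro r hr m hm
  have hlen : (h ++ [(mv, b)]).length = h.length + 1 := by simp
  rw [hlen] at hr
  rcases Nat.lt_succ_iff_lt_or_eq.1 (by rw [hlen] at hm; exact hm) with hm' | hm'
  · exact hGood.2.1 r (hist_take_of_append hr) m hm'
  · subst hm'
    exact IOK_of_legal hGood hsq0 hmv hr

lemma good_append {μ : Measure Cantor} {s : ℝ} {τ : StratII} {q0 : ℚ}
    {h : List GRound} {mv : ℚ × ℚ}
    (hGood : Good μ s τ q0 h) (hsq0 : s < (q0 : ℝ))
    (hmv : LegalMv μ h (massOf q0 h) mv)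
    (hpos : 0 < pr (τ h mv) mv) : Good μ s τ q0 (h ++ [(mv, τ h mv)]) := by
  refine ⟨consHist_append hGood.1 mv, histIOK_append hGood hsq0 hmv, ?_, ?_⟩
  · rwa [massOf_append]
  · rw [massOf_append, nodeOf_append]
    have h2 := (hmv.2 (τ h mv)).2
    apply h2.2
    calc (0:ℝ) < ((pr (τ h mv) mv : ℚ) : ℝ) := by exact_mod_cast hpos
      _ ≤ _ := h2.1

/-! #### the continuation run -/

noncomputable def contD (μ : Measure Cantor) [IsFiniteMeasure μ] (τ : StratII)
    (h0 : List GRound) : ℕ → List GRound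
  | 0 => h0
  | j + 1 =>
    let h := contD μ τ h0 j
    let mv := splitF μ (nodeOf h) (massOf 0 h)
    h ++ [(mv, τ h mv)]

lemma contD_length (μ : Measure Cantor) [IsFiniteMeasure μ] (τ : StratII)
    (h0 : List GRound) (j : ℕ) : (contD μ τ h0 j).length = h0.length + j := by
  induction j with
  | zero => rfl
  | succ j ih =>
    show (contD μ τ h0 j ++ [_]).length = _
    simp only [List.length_append, List.length_singleton, ih]
    omega

noncomputable def contRun (μ : Measure Cantor) [IsFiniteMeasure μ] (τ : StratII)
    (h0 : List GRound) : Run :=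
  fun n => (contD μ τ h0 (n + 1 - h0.length)).getD n default

lemma contRun_eq (μ : Measure Cantor) [IsFiniteMeasure μ] (τ : StratII)
    (h0 : List GRound) (j n : ℕ) (hn : n < h0.length + j) :
    contRun μ τ h0 n = (contD μ τ h0 j).getD n default := by
  induction j with
  | zero =>
    have h0' : n + 1 - h0.length = 0 := by omega
    rw [contRun, h0']
  | succ j ih =>
    rcases Nat.lt_or_ge n (h0.length + j) with hn' | hn'
    · rw [ih hn', contD]
      rw [List.getD_append _ _ _ _ (by rw [contD_length]; omega)]
    · have h0' : n + 1 - h0.length = j + 1 := by omega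
      rw [contRun, h0']

lemma hist_contRun (μ : Measure Cantor) [IsFiniteMeasure μ] (τ : StratII)
    (h0 : List GRound) (j : ℕ) :
    hist (contRun μ τ h0) (h0.length + j) = contD μ τ h0 j := by
  apply List.ext_getElem (by rw [hist_length, contD_length])
  intro i h1 h2
  rw [hist_length] at h1
  rw [hist_getElem _ _ i h1, contRun_eq μ τ h0 j i h1,
    List.getD_eq_getElem _ _ (by rw [contD_length]; omega)]

lemma getD_append_length {α : Type*} [Inhabited α] (l : List α) (a : α) :
    (l ++ [a]).getD l.length default = a := by
  rw [List.getD_eq_getElem _ _ (by simp)]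
  simp

lemma contRun_last (μ : Measure Cantor) [IsFiniteMeasure μ] (τ : StratII)
    (h0 : List GRound) (j : ℕ) :
    contRun μ τ h0 (h0.length + j) =
      (splitF μ (nodeOf (contD μ τ h0 j)) (massOf 0 (contD μ τ h0 j)),
        τ (contD μ τ h0 j) (splitF μ (nodeOf (contD μ τ h0 j)) (massOf 0 (contD μ τ h0 j)))) := by
  rw [contRun_eq μ τ h0 (j + 1) _ (by omega)]
  show (contD μ τ h0 j ++ [_]).getD (h0.length + j) default = _
  rw [← contD_length μ τ h0 j, getD_append_length]

lemma consII_contRun (μ : Measure Cantor) [IsFiniteMeasure μ] {τ : StratII}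
    {h0 : List GRound} (hc : ConsHist τ h0) : ConsII τ (contRun μ τ h0) := by
  intro n
  rcases Nat.lt_or_ge n h0.length with hn | hn
  · have hrn : contRun μ τ h0 n = h0[n]'hn := by
      rw [contRun_eq μ τ h0 0 n (by omega)]
      exact List.getD_eq_getElem _ _ hn
    have hh : hist (contRun μ τ h0) n = h0.take n := by
      apply List.ext_getElem
        (by rw [hist_length, List.length_take, Nat.min_eq_left (le_of_lt hn)])
      intro i hi1 hi2
      rw [hist_length] at hi1
      rw [hist_getElem _ _ i hi1, contRun_eq μ τ h0 0 i (by omega), List.getElem_take]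
      exact List.getD_eq_getElem _ _ (by omega : i < h0.length)
    rw [hrn, hh]
    exact hc n hn
  · set j := n - h0.length with hj
    have hnj : n = h0.length + j := by omega
    rw [hnj, contRun_last, hist_contRun]

lemma cont_exists {μ : Measure Cantor} [IsProbabilityMeasure μ] {s : ℝ} {τ : StratII}
    {h0 : List GRound} (hne : h0 ≠ []) (hc : ConsHist τ h0) (hok : HistIOK μ s h0) :
    ∃ r : Run, ConsII τ r ∧ hist r h0.length = h0 ∧ ∀ n, IOK μ s r n := by
  set r := contRun μ τ h0 with hrdef
  have hh0 : hist r h0.length = h0 := hist_contRun μ τ h0 0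
  have hlen1 : 1 ≤ h0.length := by
    rcases Nat.eq_zero_or_pos h0.length with h | h
    · exact absurd (List.length_eq_zero_iff.1 h) hne
    · exact h
  -- invariant for the split values
  have hinv : ∀ j, 0 ≤ massOf 0 (contD μ τ h0 j) ∧
      (0 < massOf 0 (contD μ τ h0 j) →
        ((massOf 0 (contD μ τ h0 j) : ℝ)) < nr μ (nodeOf (contD μ τ h0 j))) := by
    intro j
    induction j with
    | zero =>
      show 0 ≤ massOf 0 h0 ∧ _
      have hIOK := hok r hh0 (h0.length - 1) (by omega)
      have hmOK := IOK_mOK hIOK (bits r (h0.length - 1))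
      have hsel : sel r (h0.length - 1) = massOf 0 h0 := by
        apply sel_hist
        rw [show h0.length - 1 + 1 = h0.length from by omega]
        exact hh0
      have hpath : path r (h0.length - 1) ++ [bits r (h0.length - 1)] = nodeOf h0 := by
        rw [← path_succ, show h0.length - 1 + 1 = h0.length from by omega]
        exact path_eq_nodeOf hh0
      have h1 := hmOK.1
      have h2 := hmOK.2.1
      have h3 := hmOK.2.2
      rw [show valI r (h0.length - 1) (bits r (h0.length - 1)) = sel r (h0.length - 1) from rfl,
        hsel] at h1 h2 h3
      rw [hpath] at h2 h3
      refine ⟨h1, fun hpos => ?_⟩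
      apply h3
      calc (0:ℝ) < ((massOf 0 h0 : ℚ) : ℝ) := by exact_mod_cast hpos
        _ ≤ _ := h2
    | succ j ih =>
      have hspec := splitF_spec μ (nodeOf (contD μ τ h0 j)) (massOf 0 (contD μ τ h0 j)) ih.1 ih.2
      have hD : contD μ τ h0 (j + 1) = contD μ τ h0 j ++
          [(splitF μ (nodeOf (contD μ τ h0 j)) (massOf 0 (contD μ τ h0 j)),
            τ (contD μ τ h0 j) (splitF μ (nodeOf (contD μ τ h0 j)) (massOf 0 (contD μ τ h0 j))))] := rfl
      rw [hD, massOf_append, nodeOf_append]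
      have := hspec.2 (τ (contD μ τ h0 j) (splitF μ (nodeOf (contD μ τ h0 j)) (massOf 0 (contD μ τ h0 j))))
      exact ⟨this.1, this.2.2⟩
  refine ⟨r, consII_contRun μ hc, hh0, ?_⟩
  intro n
  rcases Nat.lt_or_ge n h0.length with hn | hn
  · exact hok r hh0 n hn
  · set j := n - h0.length with hj
    have hnj : n = h0.length + j := by omega
    have hspec := splitF_spec μ (nodeOf (contD μ τ h0 j)) (massOf 0 (contD μ τ h0 j))
      (hinv j).1 (hinv j).2
    have hrn : r n = (splitF μ (nodeOf (contD μ τ h0 j)) (massOf 0 (contD μ τ h0 j)),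
        τ (contD μ τ h0 j) (splitF μ (nodeOf (contD μ τ h0 j)) (massOf 0 (contD μ τ h0 j)))) := by
      rw [hrdef, hnj]
      exact contRun_last μ τ h0 j
    have hhn : hist r n = contD μ τ h0 j := by rw [hnj]; exact hist_contRun μ τ h0 j
    have hpath : path r n = nodeOf (contD μ τ h0 j) := path_eq_nodeOf hhn
    have hmOK : ∀ b', mOK μ r n b' := by
      intro b'
      have hv : valI r n b' =
          pr b' (splitF μ (nodeOf (contD μ τ h0 j)) (massOf 0 (contD μ τ h0 j))) := by
        rw [valI_eq_pr, hrn]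
      rw [mOK, hv, hpath]
      have hb := hspec.2 b'
      refine ⟨hb.1, hb.2.1, fun hp => ?_⟩
      rcases hb.1.lt_or_eq with hq | hq
      · exact hb.2.2 hq
      · rw [← hq]; simpa using hp
    have hn1 : 1 ≤ n := le_trans hlen1 hn
    have hmeq : n - 1 + 1 = n := by omega
    rw [show n = n - 1 + 1 from by omega]
    refine ⟨by rw [hmeq]; exact hmOK false, by rw [hmeq]; exact hmOK true, ?_⟩
    have hsel : sel r (n - 1) = massOf 0 (contD μ τ h0 j) := by
      apply sel_hist
      rw [hmeq]
      exact hhn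
    rw [hmeq, hrn, hsel]
    exact hspec.1

/-- Safety: at a good position, the mass picked by `τ`'s response is positive. -/
lemma picked_mass_pos {μ : Measure Cantor} [IsProbabilityMeasure μ] {s : ℝ} {A : Set Cantor}
    {τ : StratII} {q0 : ℚ}
    (hτ : ∀ r : Run, ConsII τ r → IIWinsRun μ s A r) (hsq0 : s < (q0 : ℝ))
    {h : List GRound} (hGood : Good μ s τ q0 h) {mv : ℚ × ℚ}
    (hmv : LegalMv μ h (massOf q0 h) mv) : 0 < pr (τ h mv) mv := by
  set b := τ h mv with hb
  set h' := h ++ [(mv, b)] with hh'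
  have hc' : ConsHist τ h' := consHist_append hGood.1 mv
  have hok' : HistIOK μ s h' := histIOK_append hGood hsq0 hmv
  obtain ⟨r, hcons, hhist, hIOK⟩ := cont_exists (by simp [hh']) hc' hok'
  have hwin := hτ r hcons
  rcases hwin with ⟨n, _, hbad⟩ | ⟨hall, _⟩
  · exact absurd (hIOK n) hbad
  · have hII := (hall h.length).2
    have hlen' : h'.length = h.length + 1 := by simp [hh']
    have hsel : sel r h.length = massOf 0 h' := by
      apply sel_hist
      rw [← hlen']
      exact hhist
    rw [IIOK, hsel, hh', massOf_append] at hII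
    exact lt_of_le_of_ne (hmv.2 b).1 (Ne.symm hII)

/-! ### Direction D : the step lemma -/

lemma step_exists {μ : Measure Cantor} [IsProbabilityMeasure μ] {s : ℝ} {A : Set Cantor}
    {τ : StratII} {q0 : ℚ}
    (hτ : ∀ r : Run, ConsII τ r → IIWinsRun μ s A r) (hsq0 : s < (q0 : ℝ))
    {h : List GRound} (hGood : Good μ s τ q0 h) {δ : ℝ} (hδ : 0 < δ) :
    ∃ l : List ((ℚ × ℚ) × Bool), l ≠ [] ∧ (l.map (fun p => p.2)).Nodup ∧
      (∀ p ∈ l, p.2 = τ h p.1 ∧ LegalMv μ h (massOf q0 h) p.1 ∧ 0 < pr p.2 p.1) ∧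
      (μ (cyl (nodeOf h))).toReal
          - (l.map (fun p => (μ (cyl (nodeOf h ++ [p.2]))).toReal)).sum
        ≤ (((massOf q0 h : ℚ) : ℝ) - (l.map (fun p => ((pr p.2 p.1 : ℚ) : ℝ))).sum) + δ := by
  classical
  set m : ℚ := massOf q0 h with hm
  set μ0 : ℝ := (μ (cyl (nodeOf h ++ [false]))).toReal with hμ0def
  set μ1 : ℝ := (μ (cyl (nodeOf h ++ [true]))).toReal with hμ1def
  have hm0 : 0 < m := hGood.2.2.1
  have hmR : (0 : ℝ) < (m : ℝ) := by exact_mod_cast hm0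
  have hsplit : (μ (cyl (nodeOf h))).toReal = μ0 + μ1 := measure_cyl_split' (nodeOf h)
  have hmlt : (m : ℝ) < μ0 + μ1 := by
    rw [← hsplit]; exact hGood.2.2.2
  have hμ0 : 0 ≤ μ0 := ENNReal.toReal_nonneg
  have hμ1 : 0 ≤ μ1 := ENNReal.toReal_nonneg
  -- legality of a left-component `c`
  set Lg : ℚ → Prop := fun c => 0 ≤ c ∧ c ≤ m ∧ ((c : ℝ) ≤ μ0) ∧ (0 < μ0 → (c : ℝ) < μ0) ∧
    ((m : ℝ) - (c : ℝ) ≤ μ1) ∧ (0 < μ1 → (m : ℝ) - (c : ℝ) < μ1) with hLg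
  have hLgMv : ∀ c, Lg c → LegalMv μ h m (c, m - c) := by
    intro c hc
    obtain ⟨h1, h2, h3, h4, h5, h6⟩ := hc
    refine ⟨by ring, ?_⟩
    intro b
    cases b
    · exact ⟨h1, h3, h4⟩
    · refine ⟨by simpa using h2, ?_, ?_⟩
      · show ((m - c : ℚ) : ℝ) ≤ μ1
        push_cast
        linarith
      · intro hp
        show ((m - c : ℚ) : ℝ) < μ1
        push_cast
        linarith [h6 hp]
  have hpick : ∀ c, Lg c → 0 < pr (τ h (c, m - c)) (c, m - c) :=
    fun c hc => picked_mass_pos hτ hsq0 hGood (hLgMv c hc)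
  set f : ℚ → Bool := fun c => τ h (c, m - c) with hf
  have hpickF : ∀ c, Lg c → f c = false → 0 < c := by
    intro c hc hfc
    have := hpick c hc
    have h2 : τ h (c, m - c) = f c := rfl
    rwa [h2, hfc, pr_false] at this
  have hpickT : ∀ c, Lg c → f c = true → 0 < m - c := by
    intro c hc hfc
    have := hpick c hc
    have h2 : τ h (c, m - c) = f c := rfl
    rwa [h2, hfc, pr_true] at this
  have hbetween : ∀ c1 c2 c : ℚ, Lg c1 → Lg c2 → c1 ≤ c → c ≤ c2 → Lg c := by
    intro c1 c2 c hc1 hc2 hle1 hle2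
    obtain ⟨a1, a2, a3, a4, a5, a6⟩ := hc1
    obtain ⟨b1, b2, b3, b4, b5, b6⟩ := hc2
    have hle1R : (c1 : ℝ) ≤ (c : ℝ) := by exact_mod_cast hle1
    have hle2R : (c : ℝ) ≤ (c2 : ℝ) := by exact_mod_cast hle2
    exact ⟨le_trans a1 hle1, le_trans hle2 b2, le_trans hle2R b3,
      fun hp => lt_of_le_of_lt hle2R (b4 hp), by linarith,
      fun hp => by linarith [a6 hp]⟩
  have hLgNonempty : ∃ c, Lg c := by
    rcases le_or_gt μ0 0 with h0 | h0
    · refine ⟨0, le_refl 0, hm0.le, by simpa using le_antisymm h0 hμ0 ▸ le_refl (0:ℝ), ?_, ?_, ?_⟩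
      · intro hp; linarith
      · push_cast; linarith
      · intro hp; push_cast; linarith
    · rcases le_or_gt μ1 0 with h1 | h1
      · refine ⟨m, hm0.le, le_refl m, by linarith, fun _ => by linarith, ?_, ?_⟩
        · push_cast; linarith
        · intro hp; linarith
      · obtain ⟨c, hc1, hc2⟩ := exists_rat_btwn
          (show max 0 ((m:ℝ) - μ1) < min (m:ℝ) μ0 by
            apply max_lt <;> apply lt_min <;> linarith)
        have hc0 : (0:ℝ) < c := lt_of_le_of_lt (le_max_left _ _) hc1
        have hcb : (m:ℝ) - μ1 < c := lt_of_le_of_lt (le_max_right _ _) hc1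
        have hcm : (c:ℝ) < (m:ℝ) := lt_of_lt_of_le hc2 (min_le_left _ _)
        have hca : (c:ℝ) < μ0 := lt_of_lt_of_le hc2 (min_le_right _ _)
        exact ⟨c, by exact_mod_cast hc0.le, by exact_mod_cast hcm.le, hca.le, fun _ => hca,
          by linarith, fun _ => by linarith⟩
  by_cases hext : ∃ c, Lg c ∧ f c = true
  · by_cases hexf : ∃ c, Lg c ∧ f c = false
    · -- both responses occur : two children
      obtain ⟨cw, hcw, hcwf⟩ := hexf
      obtain ⟨ct, hct, hctt⟩ := hext
      set S : Set ℝ := (fun c : ℚ => (c : ℝ)) '' {c : ℚ | Lg c ∧ f c = true} with hS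
      have hSne : S.Nonempty := ⟨(ct : ℝ), ct, ⟨hct, hctt⟩, rfl⟩
      have hSbdd : BddAbove S := by
        refine ⟨(m : ℝ), ?_⟩
        rintro x ⟨c, hc, rfl⟩
        show (c : ℝ) ≤ (m : ℝ)
        exact_mod_cast hc.1.2.1
      set β : ℝ := sSup S with hβ
      by_cases hclose : ∃ c0, (Lg c0 ∧ f c0 = false) ∧ (c0 : ℝ) < β + δ / 2
      · obtain ⟨c0, ⟨hc0, hc0f⟩, hc0β⟩ := hclose
        obtain ⟨x, hxS, hxβ⟩ := exists_lt_of_lt_csSup hSne (show β - δ/2 < β by linarith)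
        obtain ⟨c1, hc1, rfl⟩ := hxS
        -- c0 < c1 + δ
        have hkey : (c0 : ℝ) < (c1 : ℝ) + δ := by linarith
        refine ⟨[((c0, m - c0), false), ((c1, m - c1), true)], by simp, by simp, ?_, ?_⟩
        · intro p hp
          rcases List.mem_cons.1 hp with rfl | hp
          · exact ⟨hc0f.symm, hLgMv c0 hc0, by simpa using hpickF c0 hc0 hc0f⟩
          · rcases List.mem_cons.1 hp with rfl | hp
            · exact ⟨hc1.2.symm, hLgMv c1 hc1.1, by simpa using hpickT c1 hc1.1 hc1.2⟩
            · simp at hp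
        · simp only [List.map_cons, List.map_nil, List.sum_cons, List.sum_nil, pr_false, pr_true]
          rw [hsplit]
          push_cast
          linarith
      · exfalso
        push_neg at hclose
        have hcwβ : β + δ / 2 ≤ (cw : ℝ) := hclose cw ⟨hcw, hcwf⟩
        have hctβ : (ct : ℝ) ≤ β := le_csSup hSbdd ⟨ct, ⟨hct, hctt⟩, rfl⟩
        obtain ⟨c', hc'1, hc'2⟩ := exists_rat_btwn (show β < β + δ / 2 by linarith)
        have hc'Lg : Lg c' := by
          apply hbetween ct cw c' hct hcw
          · exact_mod_cast le_of_lt (lt_of_le_of_lt hctβ hc'1)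
          · exact_mod_cast le_of_lt (lt_of_lt_of_le hc'2 hcwβ)
        rcases Bool.dichotomy (f c') with hfc | hfc
        · have := hclose c' ⟨hc'Lg, hfc⟩
          linarith
        · have : (c' : ℝ) ≤ β := le_csSup hSbdd ⟨c', ⟨hc'Lg, hfc⟩, rfl⟩
          linarith
    · -- only `true` responses : one child on the right
      push_neg at hexf
      have halltrue : ∀ c, Lg c → f c = true := by
        intro c hc
        rcases Bool.dichotomy (f c) with hfc | hfc
        · exact absurd hfc (hexf c hc)
        · exact hfc
      have hμ0m : μ0 ≤ (m : ℝ) := by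
        by_contra hlt
        push_neg at hlt
        have hLgm : Lg m := by
          refine ⟨hm0.le, le_refl m, hlt.le, fun _ => hlt, by simp [hμ1], fun hp => by simp [hp]⟩
        have := hpickT m hLgm (halltrue m hLgm)
        simp at this
      rcases le_or_gt μ0 0 with h0 | h0
      · -- μ0 = 0 : take c1 = 0
        have hLg0 : Lg 0 := by
          refine ⟨le_refl 0, hm0.le, by simpa using hμ0, fun hp => by linarith, ?_, ?_⟩
          · push_cast; linarith
          · intro hp; push_cast; linarith
        refine ⟨[((0, m - 0), true)], by simp, by simp, ?_, ?_⟩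
        · intro p hp
          rcases List.mem_cons.1 hp with rfl | hp
          · exact ⟨(halltrue 0 hLg0).symm, hLgMv 0 hLg0, by simpa using hpickT 0 hLg0 (halltrue 0 hLg0)⟩
          · simp at hp
        · simp only [List.map_cons, List.map_nil, List.sum_cons, List.sum_nil, pr_true]
          rw [hsplit]
          push_cast
          linarith
      · -- μ0 > 0 : pick c1 near μ0
        have hμ1pos : 0 < μ1 := by
          rcases le_or_gt μ1 0 with h1 | h1
          · exfalso
            obtain ⟨cw', hcw'⟩ := hLgNonempty
            have hcm : cw' = m := by
              have h5 := hcw'.2.2.2.2.1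
              have h2 := hcw'.2.1
              have : (cw' : ℝ) = (m : ℝ) := by linarith [(show (cw':ℝ) ≤ (m:ℝ) by exact_mod_cast h2)]
              exact_mod_cast this
            rw [hcm] at hcw'
            have := hpickT m hcw' (halltrue m hcw')
            simp at this
          · exact h1
        obtain ⟨c1, hc11, hc12⟩ := exists_rat_btwn
          (show max (max 0 ((m:ℝ) - μ1)) (μ0 - δ) < min (m:ℝ) μ0 by
            apply max_lt
            · apply max_lt <;> apply lt_min <;> linarith
            · apply lt_min <;> linarith)
        have hb1 : (0:ℝ) < c1 := lt_of_le_of_lt (le_trans (le_max_left _ _) (le_max_left _ _)) hc11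
        have hb2 : (m:ℝ) - μ1 < c1 := lt_of_le_of_lt (le_trans (le_max_right _ _) (le_max_left _ _)) hc11
        have hb3 : μ0 - δ < c1 := lt_of_le_of_lt (le_max_right _ _) hc11
        have hb4 : (c1:ℝ) < m := lt_of_lt_of_le hc12 (min_le_left _ _)
        have hb5 : (c1:ℝ) < μ0 := lt_of_lt_of_le hc12 (min_le_right _ _)
        have hLgc1 : Lg c1 := ⟨by exact_mod_cast hb1.le, by exact_mod_cast hb4.le, hb5.le,
          fun _ => hb5, by linarith, fun _ => by linarith⟩
        refine ⟨[((c1, m - c1), true)], by simp, by simp, ?_, ?_⟩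
        · intro p hp
          rcases List.mem_cons.1 hp with rfl | hp
          · exact ⟨(halltrue c1 hLgc1).symm, hLgMv c1 hLgc1,
              by simpa using hpickT c1 hLgc1 (halltrue c1 hLgc1)⟩
          · simp at hp
        · simp only [List.map_cons, List.map_nil, List.sum_cons, List.sum_nil, pr_true]
          rw [hsplit]
          push_cast
          linarith
  · -- only `false` responses : one child on the left
    have hallfalse : ∀ c, Lg c → f c = false := by
      intro c hc
      rcases Bool.dichotomy (f c) with hfc | hfc
      · exact hfc
      · exact absurd ⟨c, hc, hfc⟩ hext
    have hμ1m : μ1 ≤ (m : ℝ) := by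
      by_contra hlt
      push_neg at hlt
      have hLg0 : Lg 0 := by
        refine ⟨le_refl 0, hm0.le, by simpa using hμ0, fun hp => by simpa using hp, ?_, ?_⟩
        · push_cast; linarith
        · intro hp; push_cast; linarith
      have := hpickF 0 hLg0 (hallfalse 0 hLg0)
      simp at this
    rcases le_or_gt μ1 0 with h1 | h1
    · -- μ1 = 0 : take c0 = m
      have hLgm : Lg m := by
        refine ⟨hm0.le, le_refl m, by linarith, fun _ => by linarith, ?_, ?_⟩
        · push_cast; linarith
        · intro hp; linarith
      refine ⟨[((m, m - m), false)], by simp, by simp, ?_, ?_⟩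
      · intro p hp
        rcases List.mem_cons.1 hp with rfl | hp
        · exact ⟨(hallfalse m hLgm).symm, hLgMv m hLgm, by simpa using hpickF m hLgm (hallfalse m hLgm)⟩
        · simp at hp
      · simp only [List.map_cons, List.map_nil, List.sum_cons, List.sum_nil, pr_false]
        rw [hsplit]
        push_cast
        linarith
    · -- μ1 > 0 : pick c0 near m - μ1
      have hμ0pos : 0 < μ0 := by
        rcases le_or_gt μ0 0 with h0 | h0
        · exfalso
          obtain ⟨cw', hcw'⟩ := hLgNonempty
          have hcm : cw' = 0 := by
            have h3 := hcw'.2.2.1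
            have h1' := hcw'.1
            have : (cw' : ℝ) = 0 := le_antisymm (by linarith) (by exact_mod_cast h1')
            exact_mod_cast this
          rw [hcm] at hcw'
          have := hpickF 0 hcw' (hallfalse 0 hcw')
          simp at this
        · exact h0
      obtain ⟨c0, hc01, hc02⟩ := exists_rat_btwn
        (show (m:ℝ) - μ1 < min (min (m:ℝ) μ0) ((m:ℝ) - μ1 + δ) by
          apply lt_min
          · apply lt_min <;> linarith
          · linarith)
      have hb2 : (c0:ℝ) < m := lt_of_lt_of_le hc02 (le_trans (min_le_left _ _) (min_le_left _ _))
      have hb3 : (c0:ℝ) < μ0 := lt_of_lt_of_le hc02 (le_trans (min_le_left _ _) (min_le_right _ _))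
      have hb4 : (c0:ℝ) < (m:ℝ) - μ1 + δ := lt_of_lt_of_le hc02 (min_le_right _ _)
      have hb1 : (0:ℝ) ≤ c0 := by linarith
      have hLgc0 : Lg c0 := ⟨by exact_mod_cast hb1, by exact_mod_cast hb2.le, hb3.le,
        fun _ => hb3, by linarith, fun _ => by linarith⟩
      refine ⟨[((c0, m - c0), false)], by simp, by simp, ?_, ?_⟩
      · intro p hp
        rcases List.mem_cons.1 hp with rfl | hp
        · exact ⟨(hallfalse c0 hLgc0).symm, hLgMv c0 hLgc0,
            by simpa using hpickF c0 hLgc0 (hallfalse c0 hLgc0)⟩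
        · simp at hp
      · simp only [List.map_cons, List.map_nil, List.sum_cons, List.sum_nil, pr_false]
        rw [hsplit]
        push_cast
        linarith

/-! ### Direction D : the tree construction -/

lemma seg_getElem (x : Cantor) (n i : ℕ) (hi : i < n) :
    (seg x n)[i]'(by simp [hi]) = x i := by
  simp [seg]

theorem exists_closed_subset_of_winsII {μ : Measure Cantor} [IsProbabilityMeasure μ]
    {s : ℝ} {A : Set Cantor} {τ : StratII}
    (hτ : ∀ r : Run, ConsII τ r → IIWinsRun μ s A r) (hs0 : 0 ≤ s) (hs1 : s < 1)
    {ε : ℝ} (hε : 0 < ε) :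
    ∃ F : Set Cantor, IsClosed F ∧ F ⊆ A ∧ 1 - s - ε ≤ (μ F).toReal := by
  classical
  -- choose the root mass
  obtain ⟨q0, hq0l, hq0r⟩ := exists_rat_btwn (show s < min 1 (s + ε / 2) by
    apply lt_min hs1; linarith)
  have hq0s : s < (q0 : ℝ) := hq0l
  have hq01 : (q0 : ℝ) < 1 := lt_of_lt_of_le hq0r (min_le_left _ _)
  have hq0ε : (q0 : ℝ) < s + ε / 2 := lt_of_lt_of_le hq0r (min_le_right _ _)
  have hq0pos : 0 < q0 := by exact_mod_cast lt_of_le_of_lt hs0 hq0s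
  -- error budgets
  set δn : ℕ → ℝ := fun n => (ε / 2) / 4 ^ (n + 1) with hδn
  have hδpos : ∀ n, 0 < δn n := by
    intro n
    apply div_pos (by linarith)
    positivity
  -- the step function
  set stepL : List GRound → ℕ → List ((ℚ × ℚ) × Bool) := fun h n =>
    if hG : Good μ s τ q0 h then Classical.choose (step_exists hτ hq0s hG (hδpos n)) else []
    with hstepdef
  have hstep : ∀ h n, Good μ s τ q0 h →
      stepL h n ≠ [] ∧ ((stepL h n).map (fun p => p.2)).Nodup ∧
      (∀ p ∈ stepL h n, p.2 = τ h p.1 ∧ LegalMv μ h (massOf q0 h) p.1 ∧ 0 < pr p.2 p.1) ∧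
      (μ (cyl (nodeOf h))).toReal
          - ((stepL h n).map (fun p => (μ (cyl (nodeOf h ++ [p.2]))).toReal)).sum
        ≤ (((massOf q0 h : ℚ) : ℝ) - ((stepL h n).map (fun p => ((pr p.2 p.1 : ℚ) : ℝ))).sum)
          + δn n := by
    intro h n hG
    rw [hstepdef]
    simp only [dif_pos hG]
    exact Classical.choose_spec (step_exists hτ hq0s hG (hδpos n))
  -- the levels of the tree
  set Lev : ℕ → Finset (List GRound) := fun n => Nat.rec {[]}
    (fun n prev => prev.biUnion (fun h => ((stepL h n).map (fun p => h ++ [p])).toFinset)) n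
    with hLev
  have hLev0 : Lev 0 = {[]} := rfl
  have hLevS : ∀ n, Lev (n + 1)
      = (Lev n).biUnion (fun h => ((stepL h n).map (fun p => h ++ [p])).toFinset) :=
    fun n => rfl
  -- membership in levels
  have hmemS : ∀ n h', h' ∈ Lev (n + 1) ↔
      ∃ h ∈ Lev n, ∃ p ∈ stepL h n, h' = h ++ [p] := by
    intro n h'
    rw [hLevS, Finset.mem_biUnion]
    constructor
    · rintro ⟨h, hh, hmem⟩
      rw [List.mem_toFinset, List.mem_map] at hmem
      obtain ⟨p, hp, rfl⟩ := hmem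
      exact ⟨h, hh, p, hp, rfl⟩
    · rintro ⟨h, hh, p, hp, rfl⟩
      exact ⟨h, hh, by rw [List.mem_toFinset, List.mem_map]; exact ⟨p, hp, rfl⟩⟩
  -- all level members are good of the right length
  have hgood : ∀ n, ∀ h ∈ Lev n, Good μ s τ q0 h ∧ h.length = n := by
    intro n
    induction n with
    | zero =>
      intro h hh
      rw [hLev0, Finset.mem_singleton] at hh
      subst hh
      exact ⟨good_nil hq0pos hq01, rfl⟩
    | succ n ih =>
      intro h' hh'
      obtain ⟨h, hh, p, hp, rfl⟩ := (hmemS n h').1 hh'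
      obtain ⟨hG, hlen⟩ := ih h hh
      obtain ⟨hp2, hpleg, hppos⟩ := (hstep h n hG).2.2.1 p hp
      have hps : h ++ [p] = h ++ [(p.1, τ h p.1)] := by rw [← hp2]
      constructor
      · rw [hps]
        exact good_append hG hq0s hpleg (by rwa [← hp2])
      · simp [hlen]
  -- node injectivity on levels
  have hnodeinj : ∀ n, ∀ h1 ∈ Lev n, ∀ h2 ∈ Lev n, nodeOf h1 = nodeOf h2 → h1 = h2 := by
    intro n
    induction n with
    | zero =>
      intro h1 hh1 h2 hh2 _
      rw [hLev0, Finset.mem_singleton] at hh1 hh2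
      rw [hh1, hh2]
    | succ n ih =>
      intro h1' hh1 h2' hh2 hnode
      obtain ⟨h1, hh1', p1, hp1, rfl⟩ := (hmemS n h1').1 hh1
      obtain ⟨h2, hh2', p2, hp2, rfl⟩ := (hmemS n h2').1 hh2
      rw [nodeOf_append, nodeOf_append] at hnode
      have hlen1 : (nodeOf h1).length = (nodeOf h2).length := by
        rw [nodeOf_length, nodeOf_length, (hgood n h1 hh1').2, (hgood n h2 hh2').2]
      obtain ⟨hn1, hn2⟩ := List.append_inj hnode hlen1
      have hh12 : h1 = h2 := ih h1 hh1' h2 hh2' hn1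
      subst hh12
      have hb : p1.2 = p2.2 := by simpa using hn2
      have hnd := (hstep h1 n (hgood n h1 hh1').1).2.1
      have : p1 = p2 := List.inj_on_of_nodup_map hnd hp1 hp2 hb
      rw [this]
  -- cardinality bound
  have hcard : ∀ n, (Lev n).card ≤ 2 ^ n := by
    intro n
    induction n with
    | zero => rw [hLev0]; simp
    | succ n ih =>
      have h1 : (Lev (n+1)).card
          ≤ ∑ h ∈ Lev n, (((stepL h n).map (fun p => h ++ [p])).toFinset).card := by
        rw [hLevS]
        exact Finset.card_biUnion_le
      have h2 : ∑ h ∈ Lev n, (((stepL h n).map (fun p => h ++ [p])).toFinset).card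
          ≤ ∑ _h ∈ Lev n, 2 := by
        apply Finset.sum_le_sum
        intro h hh
        have ha := List.toFinset_card_le ((stepL h n).map (fun p => h ++ [p]))
        have hb : ((stepL h n).map (fun p => p.2)).length ≤ 2 := by
          have hnd := (hstep h n (hgood n h hh).1).2.1
          have := List.Nodup.length_le_card hnd
          simpa using this
        simp only [List.length_map] at ha hb ⊢
        omega
      have h3 : ∑ _h ∈ Lev n, 2 = 2 * (Lev n).card := by
        rw [Finset.sum_const, smul_eq_mul, mul_comm]
      have h4 : 2 * 2 ^ n = 2 ^ (n + 1) := by ring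
      omega
  -- level sums
  set LL : ℕ → ℝ := fun n => ∑ h ∈ Lev n, (μ (cyl (nodeOf h))).toReal with hLL
  set MM : ℕ → ℝ := fun n => ∑ h ∈ Lev n, ((massOf q0 h : ℚ) : ℝ) with hMM
  have hLL0 : LL 0 = 1 := by
    rw [hLL]
    simp only [hLev0, Finset.sum_singleton, nodeOf_nil, cyl_nil, measure_univ, ENNReal.toReal_one]
  have hMM0 : MM 0 = (q0 : ℝ) := by
    rw [hMM]
    simp only [hLev0, Finset.sum_singleton, massOf_nil]
  have hMMpos : ∀ n, 0 ≤ MM n := by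
    intro n
    apply Finset.sum_nonneg
    intro h hh
    have := (hgood n h hh).1.2.2.1
    positivity
  -- children sums via biUnion
  have hchild_disj : ∀ n, Set.Pairwise ↑(Lev n)
      (Function.onFun Disjoint (fun h => ((stepL h n).map (fun p => h ++ [p])).toFinset)) := by
    intro n h1 hh1 h2 hh2 hne
    rw [Function.onFun, Finset.disjoint_left]
    intro h' hm1 hm2
    rw [List.mem_toFinset, List.mem_map] at hm1 hm2
    obtain ⟨p1, _, rfl⟩ := hm1
    obtain ⟨p2, _, he⟩ := hm2
    apply hne
    have hl1 : h1.length = h2.length := by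
      rw [(hgood n h1 (by exact_mod_cast hh1)).2, (hgood n h2 (by exact_mod_cast hh2)).2]
    exact (List.append_inj he.symm hl1).1
  have hchild_nodup : ∀ n, ∀ h ∈ Lev n, ((stepL h n).map (fun p => h ++ [p])).Nodup := by
    intro n h hh
    apply List.Nodup.map
    · intro p1 p2 hpe
      have := List.append_inj hpe rfl
      simpa using this.2
    · exact List.Nodup.of_map _ (hstep h n (hgood n h hh).1).2.1
  have hsum_child : ∀ (g : List GRound → ℝ) n,
      ∑ h' ∈ Lev (n + 1), g h' = ∑ h ∈ Lev n, ((stepL h n).map (fun p => g (h ++ [p]))).sum := by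
    intro g n
    rw [hLevS, Finset.sum_biUnion (hchild_disj n)]
    apply Finset.sum_congr rfl
    intro h hh
    rw [List.sum_toFinset _ (hchild_nodup n h hh), List.map_map]
    rfl
  -- the per-level inequality
  have hlevel : ∀ n, LL n - LL (n + 1) ≤ (MM n - MM (n + 1)) + 2 ^ n * δn n := by
    intro n
    have hLLs := hsum_child (fun h' => (μ (cyl (nodeOf h'))).toReal) n
    have hMMs := hsum_child (fun h' => ((massOf q0 h' : ℚ) : ℝ)) n
    rw [hLL, hMM]
    simp only []
    rw [hLLs, hMMs, ← Finset.sum_sub_distrib, ← Finset.sum_sub_distrib]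
    have hbound : ∑ h ∈ Lev n, ((μ (cyl (nodeOf h))).toReal
          - ((stepL h n).map (fun p => (μ (cyl (nodeOf (h ++ [p])))).toReal)).sum)
        ≤ ∑ h ∈ Lev n, ((((massOf q0 h : ℚ) : ℝ)
          - ((stepL h n).map (fun p => ((massOf q0 (h ++ [p]) : ℚ) : ℝ))).sum) + δn n) := by
      apply Finset.sum_le_sum
      intro h hh
      have hG := (hgood n h hh).1
      have hineq := (hstep h n hG).2.2.2
      have he1 : ((stepL h n).map (fun p => (μ (cyl (nodeOf (h ++ [p])))).toReal)).sum
          = ((stepL h n).map (fun p => (μ (cyl (nodeOf h ++ [p.2]))).toReal)).sum := by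
        congr 1
        apply List.map_congr_left
        intro p _
        rw [nodeOf_append]
      have he2 : ((stepL h n).map (fun p => ((massOf q0 (h ++ [p]) : ℚ) : ℝ))).sum
          = ((stepL h n).map (fun p => ((pr p.2 p.1 : ℚ) : ℝ))).sum := by
        congr 1
        apply List.map_congr_left
        intro p _
        rw [massOf_append]
      rw [he1, he2]
      exact hineq
    calc ∑ h ∈ Lev n, ((μ (cyl (nodeOf h))).toReal
            - ((stepL h n).map (fun p => (μ (cyl (nodeOf (h ++ [p])))).toReal)).sum)
        ≤ ∑ h ∈ Lev n, ((((massOf q0 h : ℚ) : ℝ)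
            - ((stepL h n).map (fun p => ((massOf q0 (h ++ [p]) : ℚ) : ℝ))).sum) + δn n) := hbound
      _ = (∑ h ∈ Lev n, (((massOf q0 h : ℚ) : ℝ)
            - ((stepL h n).map (fun p => ((massOf q0 (h ++ [p]) : ℚ) : ℝ))).sum))
          + (Lev n).card * δn n := by
            rw [Finset.sum_add_distrib, Finset.sum_const, nsmul_eq_mul]
      _ ≤ _ + 2 ^ n * δn n := by
            apply add_le_add le_rfl
            apply mul_le_mul_of_nonneg_right _ (hδpos n).le
            exact_mod_cast hcard n
  -- telescoping
  have htel : ∀ n, LL 0 - LL n ≤ (MM 0 - MM n) + ∑ k ∈ Finset.range n, 2 ^ k * δn k := by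
    intro n
    induction n with
    | zero => simp
    | succ n ih =>
      have := hlevel n
      rw [Finset.sum_range_succ]
      linarith
  have hgeom : ∀ n, ∑ k ∈ Finset.range n, 2 ^ k * δn k ≤ ε / 2 := by
    intro n
    have hterm : ∀ k, (2:ℝ) ^ k * δn k = (ε / 8) * (1 / 2) ^ k := by
      intro k
      rw [hδn]
      simp only []
      rw [show (4:ℝ) ^ (k + 1) = 4 * (2 ^ k * 2 ^ k) from by
        rw [pow_succ]
        rw [show (4:ℝ) = 2 * 2 from by norm_num, mul_pow]
        ring]
      have h2k : (2:ℝ) ^ k > 0 := by positivity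
      field_simp
      rw [mul_comm, ← mul_assoc, ← mul_assoc, ← mul_pow]; norm_num
    calc ∑ k ∈ Finset.range n, 2 ^ k * δn k = ∑ k ∈ Finset.range n, (ε / 8) * (1 / 2) ^ k := by
          apply Finset.sum_congr rfl
          intro k _
          exact hterm k
      _ = (ε / 8) * ∑ k ∈ Finset.range n, (1 / 2 : ℝ) ^ k := by rw [Finset.mul_sum]
      _ ≤ (ε / 8) * 2 := by
          apply mul_le_mul_of_nonneg_left _ (by linarith)
          have := sum_geometric_two_le n
          simpa using this
      _ ≤ ε / 2 := by linarith
  have hLLn : ∀ n, 1 - s - ε ≤ LL n := by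
    intro n
    have h1 := htel n
    have h2 := hgeom n
    have h3 := hMMpos n
    rw [hLL0, hMM0] at h1
    linarith
  -- the covers
  set C : ℕ → Set Cantor := fun n => ⋃ h ∈ Lev n, cyl (nodeOf h) with hC
  have hCmeas : ∀ n, MeasurableSet (C n) :=
    fun n => MeasurableSet.biUnion (Finset.countable_toSet _) (fun t _ => measurableSet_cyl _)
  have hCmeasure : ∀ n, (μ (C n)).toReal = LL n := by
    intro n
    have hdisj : Set.Pairwise ↑(Lev n) (Function.onFun Disjoint (fun h => cyl (nodeOf h))) := by
      intro h1 hh1 h2 hh2 hne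
      apply cyl_disjoint
      · rw [nodeOf_length, nodeOf_length, (hgood n h1 (by exact_mod_cast hh1)).2,
          (hgood n h2 (by exact_mod_cast hh2)).2]
      · intro hcon
        exact hne (hnodeinj n h1 (by exact_mod_cast hh1) h2 (by exact_mod_cast hh2) hcon)
    rw [hC]
    simp only []
    rw [measure_biUnion_finset (μ := μ) hdisj (fun t _ => measurableSet_cyl _),
      ENNReal.toReal_sum (fun t _ => (measure_lt_top μ _).ne)]
  have hanti : Antitone C := by
    apply antitone_nat_of_succ_le
    intro n x hx
    rw [hC] at hx ⊢
    simp only [Set.mem_iUnion] at hx ⊢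
    obtain ⟨h', hh', hxh⟩ := hx
    obtain ⟨h, hh, p, hp, rfl⟩ := (hmemS n h').1 hh'
    refine ⟨h, hh, ?_⟩
    rw [nodeOf_append] at hxh
    exact cyl_append_subset _ _ hxh
  set F : Set Cantor := ⋂ n, C n with hF
  have hFclosed : IsClosed F :=
    isClosed_iInter (fun n =>
      Set.Finite.isClosed_biUnion (Finset.finite_toSet _) (fun t _ => isClosed_cyl _))
  have hFmeasure : 1 - s - ε ≤ (μ F).toReal := by
    have htend := tendsto_measure_iInter_atTop (μ := μ)
      (fun n => (hCmeas n).nullMeasurableSet) hanti ⟨0, (measure_lt_top μ _).ne⟩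
    have htoReal : Filter.Tendsto (fun n => (μ (C n)).toReal) Filter.atTop (nhds (μ F).toReal) :=
      (ENNReal.tendsto_toReal (measure_lt_top μ _).ne).comp htend
    apply ge_of_tendsto' htoReal
    intro n
    rw [hCmeasure n]
    exact hLLn n
  refine ⟨F, hFclosed, ?_, hFmeasure⟩
  -- F ⊆ A : the branch argument
  intro x hx
  have hxn : ∀ n, ∃ h ∈ Lev n, x ∈ cyl (nodeOf h) := by
    intro n
    have hxC : x ∈ C n := Set.mem_iInter.1 hx n
    rw [hC] at hxC
    simpa only [Set.mem_iUnion, exists_prop] using hxC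
  have hnode_eq : ∀ n, ∀ h ∈ Lev n, x ∈ cyl (nodeOf h) → nodeOf h = seg x n := by
    intro n h hh hxh
    have := eq_seg_of_mem_cyl hxh
    rwa [nodeOf_length, (hgood n h hh).2] at this
  set HB : ℕ → List GRound := fun n => Classical.choose (hxn n) with hHB
  have hHBspec : ∀ n, HB n ∈ Lev n ∧ x ∈ cyl (nodeOf (HB n)) := by
    intro n
    have := Classical.choose_spec (hxn n)
    exact ⟨this.1, this.2⟩
  have huniq : ∀ n, ∀ h ∈ Lev n, x ∈ cyl (nodeOf h) → h = HB n := by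
    intro n h hh hxh
    apply hnodeinj n h hh (HB n) (hHBspec n).1
    rw [hnode_eq n h hh hxh, hnode_eq n (HB n) (hHBspec n).1 (hHBspec n).2]
  have hstepHB : ∀ n, ∃ p ∈ stepL (HB n) n, HB (n + 1) = HB n ++ [p] := by
    intro n
    obtain ⟨h, hh, p, hp, he⟩ := (hmemS n (HB (n+1))).1 (hHBspec (n+1)).1
    have hxh : x ∈ cyl (nodeOf h) := by
      have := (hHBspec (n+1)).2
      rw [he, nodeOf_append] at this
      exact cyl_append_subset _ _ this
    have hh' : h = HB n := huniq n h hh hxh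
    subst hh'
    exact ⟨p, hp, he⟩
  set r : Run := fun n => (HB (n + 1)).getD n default with hr
  have hHB0 : HB 0 = [] := by
    have := (hHBspec 0).1
    rw [hLev0, Finset.mem_singleton] at this
    exact this
  have hhist : ∀ n, hist r n = HB n := by
    intro n
    induction n with
    | zero => rw [hHB0]; rfl
    | succ n ih =>
      obtain ⟨p, hp, he⟩ := hstepHB n
      have hgen : ∀ (l : List GRound) (a : GRound) (k : ℕ), k = l.length →
          (l ++ [a]).getD k default = a := by
        intro l a k hk
        subst hk
        exact getD_append_length l a
      have hrn : r n = p := by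
        rw [hr]
        simp only []
        rw [he]
        exact hgen _ _ _ (hgood n (HB n) (hHBspec n).1).2.symm
      rw [hist_succ, ih, hrn, ← he]
  have hconsII : ConsII τ r := by
    intro n
    obtain ⟨p, hp, he⟩ := hstepHB n
    have hch : ConsHist τ (HB (n + 1)) := (hgood (n+1) (HB (n+1)) (hHBspec (n+1)).1).1.1
    have hlen : (HB (n+1)).length = n + 1 := (hgood (n+1) (HB (n+1)) (hHBspec (n+1)).1).2
    have hrn : r n = (HB (n + 1))[n]'(by omega) := by
      rw [hr]
      simp only []
      exact List.getD_eq_getElem _ _ (by omega)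
    have := hch n (by omega)
    rw [← hrn] at this
    have htake : (HB (n + 1)).take n = HB n := by
      rw [he]
      exact List.take_left' (hgood n (HB n) (hHBspec n).1).2
    rw [htake, ← hhist n] at this
    exact this
  have hIOK : ∀ n, IOK μ s r n := by
    intro n
    have hG := (hgood (n+1) (HB (n+1)) (hHBspec (n+1)).1).1
    have hlen : (HB (n+1)).length = n + 1 := (hgood (n+1) (HB (n+1)) (hHBspec (n+1)).1).2
    apply hG.2.1 r _ n (by omega)
    rw [hlen]
    exact hhist (n+1)
  have hwin := hτ r hconsII
  rcases hwin with ⟨n, _, hbad⟩ | ⟨_, hA⟩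
  · exact absurd (hIOK n) hbad
  · have hbits : bits r = x := by
      funext n
      have hpath : path r (n+1) = seg x (n+1) := by
        rw [path_eq_nodeOf (hhist (n+1))]
        exact hnode_eq (n+1) (HB (n+1)) (hHBspec (n+1)).1 (hHBspec (n+1)).2
      have h1 : seg (bits r) (n+1) = seg x (n+1) := by
        rw [← path_eq_seg]
        exact hpath
      calc bits r n = (seg (bits r) (n+1))[n]'(by simp) := (seg_getElem _ _ n (by omega)).symm
        _ = (seg x (n+1))[n]'(by simp) := List.getElem_of_eq h1 _
        _ = x n := seg_getElem _ _ n (by omega)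
    rwa [hbits] at hA

/-! ### the main theorem -/

/-- Martin's theorem: the measure game `G(s, A)` characterizes inner and outer measure:
player I wins `G(s,A)` iff `μ_*(Aᶜ) > s`, and player II wins `G(s,A)` iff `μ*(Aᶜ) ≤ s`. -/
theorem measure_game_characterization (μ : Measure Cantor) [IsProbabilityMeasure μ]
    (A : Set Cantor) (s : ℝ) (hs0 : 0 ≤ s) (hs1 : s < 1) :
    (s < innerM μ Aᶜ ↔ WinsI μ s A) ∧ (outerM μ Aᶜ ≤ s ↔ WinsII μ s A) := by
  constructor
  · constructor
    · intro hlt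
      rw [innerM] at hlt
      have hSne : {v : ℝ | ∃ F : Set Cantor, IsClosed F ∧ F ⊆ Aᶜ ∧ v = (μ F).toReal}.Nonempty :=
        ⟨(μ ∅).toReal, ∅, isClosed_empty, Set.empty_subset _, rfl⟩
      obtain ⟨v, hv, hsv⟩ := exists_lt_of_lt_csSup hSne hlt
      obtain ⟨F, hF, hFA, rfl⟩ := hv
      obtain ⟨qq, hq1, hq2⟩ := exists_rat_btwn hsv
      exact winsI_of_closed hs0 hF hFA qq hq1 hq2
    · intro hW
      obtain ⟨σ, hσ⟩ := hW
      obtain ⟨F, hF, hFA, hFm⟩ := exists_closed_of_winsI hs0 σ hσ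
      rw [innerM]
      have hmem : (μ F).toReal ∈
          {v : ℝ | ∃ F : Set Cantor, IsClosed F ∧ F ⊆ Aᶜ ∧ v = (μ F).toReal} :=
        ⟨F, hF, hFA, rfl⟩
      have hbdd : BddAbove {v : ℝ | ∃ F : Set Cantor, IsClosed F ∧ F ⊆ Aᶜ ∧ v = (μ F).toReal} := by
        refine ⟨1, ?_⟩
        rintro v ⟨F', _, _, rfl⟩
        calc (μ F').toReal ≤ (μ Set.univ).toReal :=
              ENNReal.toReal_mono (measure_lt_top μ _).ne (measure_mono (Set.subset_univ _))
          _ = 1 := by rw [measure_univ, ENNReal.toReal_one]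
      exact lt_of_lt_of_le hFm (le_csSup hbdd hmem)
  · constructor
    · intro hle
      apply winsII_of_open
      intro q hq
      rw [outerM] at hle
      have hSne : {v : ℝ | ∃ U : Set Cantor, IsOpen U ∧ Aᶜ ⊆ U ∧ v = (μ U).toReal}.Nonempty :=
        ⟨(μ Set.univ).toReal, Set.univ, isOpen_univ, Set.subset_univ _, rfl⟩
      obtain ⟨v, hv, hvq⟩ := exists_lt_of_csInf_lt hSne (lt_of_le_of_lt hle hq)
      obtain ⟨U, hU, hsub, rfl⟩ := hv
      exact ⟨U, hU, hsub, hvq⟩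
    · intro hW
      obtain ⟨τ, hτ⟩ := hW
      rw [outerM]
      apply le_of_forall_pos_le_add
      intro ε hε
      obtain ⟨F, hF, hFA, hFm⟩ := exists_closed_subset_of_winsII hτ hs0 hs1 hε
      have hbdd : BddBelow {v : ℝ | ∃ U : Set Cantor, IsOpen U ∧ Aᶜ ⊆ U ∧ v = (μ U).toReal} := by
        refine ⟨0, ?_⟩
        rintro v ⟨U, _, _, rfl⟩
        exact ENNReal.toReal_nonneg
      have hmem : (μ Fᶜ).toReal ∈
          {v : ℝ | ∃ U : Set Cantor, IsOpen U ∧ Aᶜ ⊆ U ∧ v = (μ U).toReal} :=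
        ⟨Fᶜ, hF.isOpen_compl, Set.compl_subset_compl.2 hFA, rfl⟩
      have h1 : (μ F).toReal + (μ Fᶜ).toReal = 1 := by
        have hadd : μ F + μ Fᶜ = 1 := by
          rw [measure_add_measure_compl hF.measurableSet, measure_univ]
        have := congrArg ENNReal.toReal hadd
        rwa [ENNReal.toReal_add (measure_lt_top μ _).ne (measure_lt_top μ _).ne,
          ENNReal.toReal_one] at this
      calc sInf {v : ℝ | ∃ U : Set Cantor, IsOpen U ∧ Aᶜ ⊆ U ∧ v = (μ U).toReal}
          ≤ (μ Fᶜ).toReal := csInf_le hbdd hmem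
        _ ≤ s + ε := by linarith

end MeasureGame
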